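/- arXiv:2312.09122 — 8 statements merged into one kernel-verified Lean document; each statement's English description precedes it below -/
import Mathlib

section
/- A countable torsion-free abelian group A is free if and only if every finitely generated subgroup of A is contained in a finitely generated pure subgroup of A. (Pontryagin's criterion.) -/
section PontryaginAux

variable {A : Type} [AddCommGroup A]

/-- Splitting lemma: a pure submodule of a finitely generated submodule of a torsion-free
module has a free complement. -/
private theorem pontryagin_split [NoZeroSMulDivisors ℤ A] {M₁ M₂ : Submodule ℤ A}
    (hle : M₁ ≤ M₂) (hfg : M₂.FG)
    (hpure : ∀ (n : ℤ) (a : A), n ≠ 0 → n • a ∈ M₁ → a ∈ M₁) :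
    ∃ C : Submodule ℤ A, C ⊓ M₁ = ⊥ ∧ M₁ ⊔ C = M₂ ∧ Module.Free ℤ C := by
  classical
  set p : Submodule ℤ M₂ := M₁.comap M₂.subtype with hp
  haveI : Module.Finite ℤ M₂ := Module.Finite.iff_fg.mpr hfg
  haveI : NoZeroSMulDivisors ℤ (M₂ ⧸ p) := by
    constructor
    intro c q hcq
    by_cases hc : c = 0
    · exact Or.inl hc
    · refine Or.inr ?_
      obtain ⟨x, rfl⟩ := Submodule.Quotient.mk_surjective p q
      rw [← Submodule.Quotient.mk_smul, Submodule.Quotient.mk_eq_zero] at hcq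
      rw [Submodule.Quotient.mk_eq_zero]
      have : (c • x : M₂) = c • (x : A) := rfl
      exact Submodule.mem_comap.mpr (hpure c (x : A) hc (by
        simpa using (Submodule.mem_comap.mp hcq)))
  haveI : Module.Free ℤ (M₂ ⧸ p) := Module.free_of_finite_type_torsion_free'
  obtain ⟨s, hs⟩ := Module.projective_lifting_property p.mkQ LinearMap.id
    (Submodule.Quotient.mk_surjective p)
  have hsq : ∀ q, p.mkQ (s q) = q := fun q => by
    have := congrArg (fun f => f q) hs; simpa using this
  refine ⟨(LinearMap.range s).map M₂.subtype, ?_, ?_, ?_⟩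
  · rw [eq_bot_iff]
    rintro x ⟨hx1, hx2⟩
    obtain ⟨y, ⟨q, rfl⟩, rfl⟩ := hx1
    have hmem : s q ∈ p := Submodule.mem_comap.mpr hx2
    have hq : q = 0 := by
      have h0 : p.mkQ (s q) = 0 := by
        rwa [Submodule.mkQ_apply, Submodule.Quotient.mk_eq_zero]
      rwa [hsq q] at h0
    simp [hq]
  · apply le_antisymm
    · exact sup_le hle (Submodule.map_subtype_le _ _)
    · intro x hx
      set y := s (p.mkQ ⟨x, hx⟩) with hy
      have hmem : (⟨x, hx⟩ - y : M₂) ∈ p := by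
        have h0 : p.mkQ ((⟨x, hx⟩ : M₂) - y) = 0 := by
          rw [map_sub, hy, hsq, sub_self]
        rwa [Submodule.mkQ_apply, Submodule.Quotient.mk_eq_zero] at h0
      have hmem' : ((⟨x, hx⟩ - y : M₂) : A) ∈ M₁ := hmem
      refine Submodule.mem_sup.mpr ⟨((⟨x, hx⟩ - y : M₂) : A), hmem',
        (y : A), ⟨y, ⟨_, rfl⟩, rfl⟩, by simp⟩
  · have hinj : Function.Injective (M₂.subtype ∘ₗ s) := by
      intro a b hab
      have hsab : s a = s b := Subtype.ext hab
      have h2 : p.mkQ (s a) = p.mkQ (s b) := by rw [hsab]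
      rwa [hsq, hsq] at h2
    have hrange : (LinearMap.range s).map M₂.subtype = LinearMap.range (M₂.subtype ∘ₗ s) := by
      rw [LinearMap.range_comp]
    rw [hrange]
    exact Module.Free.of_equiv (LinearEquiv.ofInjective _ hinj)

private noncomputable def pontryaginChain (A : Type) [AddCommGroup A]
    (htf : ∀ (n : ℤ) (a : A), n ≠ 0 → n • a = 0 → a = 0)
    (hstep : ∀ X : Submodule ℤ A, X.FG → ∃ Y : Submodule ℤ A,
      X ≤ Y ∧ Y.FG ∧ ∀ (n : ℤ) (a : A), n ≠ 0 → n • a ∈ Y → a ∈ Y)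
    (e : ℕ → A) :
    ℕ → {Y : Submodule ℤ A // Y.FG ∧ ∀ (n : ℤ) (a : A), n ≠ 0 → n • a ∈ Y → a ∈ Y}
  | 0 => ⟨⊥, Submodule.fg_bot, fun n a hn ha => by
      simp only [Submodule.mem_bot] at ha ⊢; exact htf n a hn ha⟩
  | n + 1 =>
    let H := hstep ((pontryaginChain A htf hstep e n).1 ⊔ Submodule.span ℤ {e n})
      (Submodule.FG.sup (pontryaginChain A htf hstep e n).2.1 (Submodule.fg_span_singleton _))
    ⟨H.choose, H.choose_spec.2.1, H.choose_spec.2.2⟩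

private theorem pontryaginChain_succ (A : Type) [AddCommGroup A]
    (htf : ∀ (n : ℤ) (a : A), n ≠ 0 → n • a = 0 → a = 0)
    (hstep : ∀ X : Submodule ℤ A, X.FG → ∃ Y : Submodule ℤ A,
      X ≤ Y ∧ Y.FG ∧ ∀ (n : ℤ) (a : A), n ≠ 0 → n • a ∈ Y → a ∈ Y)
    (e : ℕ → A) (n : ℕ) :
    (pontryaginChain A htf hstep e n).1 ⊔ Submodule.span ℤ {e n} ≤
      (pontryaginChain A htf hstep e (n + 1)).1 := by
  simp only [pontryaginChain]
  exact (hstep ((pontryaginChain A htf hstep e n).1 ⊔ Submodule.span ℤ {e n})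
    (Submodule.FG.sup (pontryaginChain A htf hstep e n).2.1
      (Submodule.fg_span_singleton _))).choose_spec.1

end PontryaginAux

/-- Pontryagin's criterion: a countable torsion-free abelian group `A` is free if and
only if every finitely generated subgroup of `A` is contained in a finitely generated
pure subgroup of `A` (a subgroup `Y` is pure iff `A / Y` is torsion-free, i.e.
`n • a ∈ Y` with `n ≠ 0` implies `a ∈ Y`). -/
theorem stmt1 (A : Type) [AddCommGroup A] [Countable A]
    (htf : ∀ (n : ℤ) (a : A), n ≠ 0 → n • a = 0 → a = 0) :
    Module.Free ℤ A ↔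
      ∀ X : AddSubgroup A, X.FG →
        ∃ Y : AddSubgroup A, Y.FG ∧ X ≤ Y ∧
          ∀ (n : ℤ) (a : A), n ≠ 0 → n • a ∈ Y → a ∈ Y := by
  classical
  haveI : NoZeroSMulDivisors ℤ A := by
    constructor
    intro c x hcx
    by_cases hc : c = 0
    · exact Or.inl hc
    · exact Or.inr (htf c x hc hcx)
  constructor
  · -- forward direction
    intro hfree X hX
    haveI := hfree
    let b := Module.Free.chooseBasis ℤ A
    set ι := Module.Free.ChooseBasisIndex ℤ A
    -- X as a submodule
    set X' : Submodule ℤ A := AddSubgroup.toIntSubmodule X with hX'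
    have hX'fg : X'.FG := by
      rw [Submodule.fg_iff_addSubgroup_fg, AddSubgroup.toIntSubmodule_toAddSubgroup]
      exact hX
    obtain ⟨T, hT⟩ := hX'fg
    set s : Finset ι := T.biUnion (fun a => (b.repr a).support) with hs
    set P : Submodule ℤ A := (Finsupp.supported ℤ ℤ (↑s : Set ι)).comap
      (b.repr : A →ₗ[ℤ] (ι →₀ ℤ)) with hP
    have hXP : X' ≤ P := by
      rw [← hT, Submodule.span_le]
      intro a ha
      simp only [P, Submodule.mem_comap, Finsupp.mem_supported]
      intro i hi
      exact Finset.mem_coe.mpr (Finset.mem_biUnion.mpr ⟨a, ha, hi⟩)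
    have hPpure : ∀ (n : ℤ) (a : A), n ≠ 0 → n • a ∈ P → a ∈ P := by
      intro n a hn ha
      simp only [P, Submodule.mem_comap, Finsupp.mem_supported] at ha ⊢
      intro i hi
      apply ha
      rw [map_smul]
      simp only [Finset.mem_coe, Finsupp.mem_support_iff, Finsupp.smul_apply,
        smul_eq_mul] at hi ⊢
      exact mul_ne_zero hn hi
    have hPfg : P.FG := by
      have : P = (Finsupp.supported ℤ ℤ (↑s : Set ι)).map
          (b.repr.symm : (ι →₀ ℤ) →ₗ[ℤ] A) := by
        rw [hP, Submodule.comap_equiv_eq_map_symm]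
      rw [this]
      apply Submodule.FG.map
      rw [Finsupp.supported_eq_span_single]
      exact Submodule.fg_span ((s.finite_toSet).image _)
    refine ⟨P.toAddSubgroup, ?_, ?_, ?_⟩
    · rw [← Submodule.fg_iff_addSubgroup_fg]; exact hPfg
    · intro x hx
      exact hXP hx
    · intro n a hn ha
      exact hPpure n a hn ha
  · -- backward direction: Pontryagin's criterion
    intro h
    obtain ⟨e, he⟩ := exists_surjective_nat A
    have hstep : ∀ X : Submodule ℤ A, X.FG → ∃ Y : Submodule ℤ A,
        X ≤ Y ∧ Y.FG ∧ ∀ (n : ℤ) (a : A), n ≠ 0 → n • a ∈ Y → a ∈ Y := by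
      intro X hX
      obtain ⟨Y, hY1, hY2, hY3⟩ := h X.toAddSubgroup
        ((Submodule.fg_iff_addSubgroup_fg X).1 hX)
      refine ⟨AddSubgroup.toIntSubmodule Y, ?_, ?_, ?_⟩
      · intro x hx; exact hY2 hx
      · rw [Submodule.fg_iff_addSubgroup_fg, AddSubgroup.toIntSubmodule_toAddSubgroup]
        exact hY1
      · intro n a hn ha; exact hY3 n a hn ha
    set M : ℕ → Submodule ℤ A := fun n => (pontryaginChain A htf hstep e n).1 with hM
    have hMfg : ∀ n, (M n).FG := fun n => (pontryaginChain A htf hstep e n).2.1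
    have hMpure : ∀ n, ∀ (k : ℤ) (a : A), k ≠ 0 → k • a ∈ M n → a ∈ M n :=
      fun n => (pontryaginChain A htf hstep e n).2.2
    have hMstep : ∀ n, M n ⊔ Submodule.span ℤ {e n} ≤ M (n + 1) :=
      fun n => pontryaginChain_succ A htf hstep e n
    have hMmono : Monotone M := monotone_nat_of_le_succ
      (fun n => le_trans le_sup_left (hMstep n))
    have hM0 : M 0 = ⊥ := rfl
    choose C hC1 hC2 hC3 using fun n =>
      pontryagin_split (hMmono (Nat.le_succ n)) (hMfg (n+1)) (hMpure n)
    have hCle : ∀ n, C n ≤ M (n + 1) := fun n => (hC2 n) ▸ le_sup_right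
    -- independence of the complements
    have hkey : ∀ i N (x : A), x ∈ C i →
        x ∈ (⨆ j, ⨆ _ : j < N ∧ j ≠ i, C j) → x = 0 := by
      intro i N
      induction N with
      | zero =>
        intro x hxC hxK
        have hbot : (⨆ j, ⨆ _ : j < 0 ∧ j ≠ i, C j) ≤ (⊥ : Submodule ℤ A) :=
          iSup₂_le fun j hj => absurd hj.1 (Nat.not_lt_zero j)
        simpa using hbot hxK
      | succ N IH =>
        intro x hxC hxK
        by_cases hNi : N = i
        · have hle : (⨆ j, ⨆ _ : j < N + 1 ∧ j ≠ i, C j) ≤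
              (⨆ j, ⨆ _ : j < N ∧ j ≠ i, C j) := by
            refine iSup₂_le fun j hj => le_iSup₂_of_le j ?_ le_rfl
            exact ⟨lt_of_le_of_ne (Nat.lt_succ_iff.1 hj.1) (hNi ▸ hj.2), hj.2⟩
          exact IH x hxC (hle hxK)
        · by_cases hNlt : N < i
          · have hKM : (⨆ j, ⨆ _ : j < N + 1 ∧ j ≠ i, C j) ≤ M i := by
              refine iSup₂_le fun j hj => (hCle j).trans (hMmono ?_)
              exact Nat.succ_le_of_lt (lt_of_le_of_lt (Nat.lt_succ_iff.1 hj.1) hNlt)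
            have : x ∈ C i ⊓ M i := ⟨hxC, hKM hxK⟩
            rw [hC1 i] at this
            simpa using this
          · have hiN : i < N := lt_of_le_of_ne (Nat.not_lt.1 hNlt) (Ne.symm hNi)
            have hdecomp : (⨆ j, ⨆ _ : j < N + 1 ∧ j ≠ i, C j) ≤
                (⨆ j, ⨆ _ : j < N ∧ j ≠ i, C j) ⊔ C N := by
              refine iSup₂_le fun j hj => ?_
              rcases Nat.lt_succ_iff_lt_or_eq.1 hj.1 with hlt | rfl
              · exact le_trans (le_iSup₂_of_le j ⟨hlt, hj.2⟩ le_rfl) le_sup_left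
              · exact le_sup_right
            obtain ⟨y, hy, z, hz, hyz⟩ := Submodule.mem_sup.1 (hdecomp hxK)
            have hxM : x ∈ M N := hMmono (Nat.succ_le_of_lt hiN) (hCle i hxC)
            have hyM : y ∈ M N := by
              have : (⨆ j, ⨆ _ : j < N ∧ j ≠ i, C j) ≤ M N :=
                iSup₂_le fun j hj => (hCle j).trans (hMmono (Nat.succ_le_of_lt hj.1))
              exact this hy
            have hz0 : z = 0 := by
              have hzeq : z = x - y := by rw [← hyz]; abel
              have : z ∈ C N ⊓ M N := ⟨hz, hzeq ▸ sub_mem hxM hyM⟩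
              rw [hC1 N] at this
              simpa using this
            have hxy : x = y := by rw [← hyz, hz0, add_zero]
            exact IH x hxC (hxy ▸ hy)
    have hind : iSupIndep C := by
      intro i
      rw [Submodule.disjoint_def]
      intro x hxC hxS
      have hsub : (⨆ j, ⨆ _ : j ≠ i, C j) ≤ ⨆ N, ⨆ j, ⨆ _ : j < N ∧ j ≠ i, C j := by
        refine iSup₂_le fun j hj => le_iSup_of_le (j + 1) ?_
        exact le_iSup₂_of_le j ⟨Nat.lt_succ_self j, hj⟩ le_rfl
      have hdir : Directed (· ≤ ·) (fun N => ⨆ j, ⨆ _ : j < N ∧ j ≠ i, C j) := by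
        apply Monotone.directed_le
        intro N₁ N₂ hN
        exact iSup₂_le fun j hj => le_iSup₂_of_le j ⟨lt_of_lt_of_le hj.1 hN, hj.2⟩ le_rfl
      obtain ⟨N, hxK⟩ := (Submodule.mem_iSup_of_directed _ hdir).1 (hsub hxS)
      exact hkey i N x hxC hxK
    have hMsub : ∀ n, M n ≤ ⨆ j, C j := by
      intro n
      induction n with
      | zero => rw [hM0]; exact bot_le
      | succ n IH =>
        rw [← hC2 n]
        exact sup_le IH (le_iSup C n)
    have hsupC : (⨆ n, C n) = ⊤ := by
      rw [eq_top_iff]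
      intro a _
      obtain ⟨k, rfl⟩ := he a
      exact hMsub (k + 1) ((hMstep k) (le_sup_right (α := Submodule ℤ A)
        (Submodule.mem_span_singleton_self (e k))))
    have hinternal := DirectSum.isInternal_submodule_of_iSupIndep_of_iSup_eq_top hind hsupC
    haveI : ∀ n, Module.Free ℤ (C n) := hC3
    exact Module.Free.of_equiv (LinearEquiv.ofBijective (DirectSum.coeLinearMap C) hinternal)
end

section
/- Let 0 → K → F → A → 0 be a short exact sequence of abelian groups where F is torsion-free and K is free with basis B_K. If A is not torsion-free (equivalently, K is not a pure subgroup of F), then there exists a homomorphism φ : K → ℤ that does not extend to a homomorphism F → ℤ, and moreover φ can be chosen so that there is a unique t* ∈ B_K with φ(t*) = 1 and φ(t) = 0 for all other basis elements t ∈ B_K. -/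
/-- Let `0 → K → F → A → 0` be a short exact sequence of abelian groups where `F` is
torsion-free and `K` is free with basis indexed by `ι` (so `A ≅ F / K`, with `K`
embedded in `F` via the injective map `f`).  If `A` is not torsion-free
(equivalently, `K` is not pure in `F`), then there is a homomorphism `φ : K → ℤ`
that does not extend to a homomorphism `F → ℤ` and a unique basis element `t*` with
`φ t* = 1` and `φ t = 0` for every other basis element `t`. -/
theorem stmt4 (K F : Type) [AddCommGroup K] [AddCommGroup F]
    (ι : Type) (b : Module.Basis ι ℤ K)
    (f : K →+ F) (hinj : Function.Injective f)
    (htfF : ∀ (n : ℤ) (x : F), n ≠ 0 → n • x = 0 → x = 0)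
    (hnotpure : ∃ (n : ℤ) (x : F), n ≠ 0 ∧ n • x ∈ f.range ∧ x ∉ f.range) :
    ∃ φ : K →+ ℤ,
      (¬ ∃ ψ : F →+ ℤ, ψ.comp f = φ) ∧
      ∃! i : ι, φ (b i) = 1 ∧ ∀ j : ι, j ≠ i → φ (b j) = 0 := by
  obtain ⟨n, x, hn, ⟨k, hk⟩, hx⟩ := hnotpure
  by_cases hdiv : ∀ i, n ∣ b.repr k i
  · exfalso
    set k' : K := b.repr.symm ((b.repr k).mapRange (· / n) (by simp)) with hk'
    have hnk' : n • k' = k := by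
      apply b.repr.injective
      ext i
      have := hdiv i
      simp only [hk', map_smul, LinearEquiv.apply_symm_apply, Finsupp.smul_apply,
        Finsupp.mapRange_apply, smul_eq_mul]
      rw [mul_comm, Int.ediv_mul_cancel this]
    have hfx : n • (f k' - x) = 0 := by
      rw [smul_sub, ← map_zsmul, hnk', hk, sub_self]
    exact hx ⟨k', sub_eq_zero.mp (htfF n _ hn hfx)⟩
  · push_neg at hdiv
    obtain ⟨i, hi⟩ := hdiv
    refine ⟨(b.coord i).toAddMonoidHom, ?_, i, ⟨by simp, fun j hj => ?_⟩, ?_⟩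
    · rintro ⟨ψ, hψ⟩
      apply hi
      have h1 : ψ (f k) = b.repr k i := by
        have := congrArg (fun g => g k) hψ
        simpa using this
      refine ⟨ψ x, ?_⟩
      rw [← h1, hk, map_zsmul, smul_eq_mul]
    · simp [Module.Basis.repr_self, Finsupp.single_apply, hj]
    · rintro j ⟨hj1, hj2⟩
      by_contra hne
      have := hj2 i (Ne.symm hne)
      simp at this
end

section
/- Let A be a countable, torsion-free, nonfree abelian group, let 0 → K → F → A → 0 be a free resolution of A (F, K free abelian groups), and let B_K be a basis for K. Then there exists a homomorphism φ : K → ℤ such that φ does not extend to any homomorphism ψ : F → ℤ, and φ maps every element of B_K into {0, 1}. -/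
open Submodule

section PCL
variable {M : Type*} [AddCommGroup M]

/-- The purification (pure closure) of a submodule. -/
def pcl (S : Submodule ℤ M) : Submodule ℤ M where
  carrier := {a | ∃ c : ℤ, c ≠ 0 ∧ c • a ∈ S}
  add_mem' := by
    rintro a b ⟨c, hc, hca⟩ ⟨d, hd, hdb⟩
    refine ⟨c * d, mul_ne_zero hc hd, ?_⟩
    have h1 : (c * d) • a = d • (c • a) := by rw [mul_comm, mul_smul]
    have h2 : (c * d) • b = c • (d • b) := mul_smul c d b
    rw [smul_add, h1, h2]
    exact add_mem (S.smul_mem d hca) (S.smul_mem c hdb)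
  zero_mem' := ⟨1, one_ne_zero, by simp⟩
  smul_mem' := by
    rintro z a ⟨c, hc, hca⟩
    exact ⟨c, hc, by rw [smul_comm]; exact S.smul_mem z hca⟩

lemma mem_pcl {S : Submodule ℤ M} {a : M} : a ∈ pcl S ↔ ∃ c : ℤ, c ≠ 0 ∧ c • a ∈ S :=
  Iff.rfl

lemma le_pcl (S : Submodule ℤ M) : S ≤ pcl S := fun a ha => ⟨1, one_ne_zero, by simpa⟩

lemma pcl_mono {S S' : Submodule ℤ M} (h : S ≤ S') : pcl S ≤ pcl S' := by
  rintro a ⟨c, hc, hca⟩; exact ⟨c, hc, h hca⟩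

lemma smul_mem_pcl_iff {S : Submodule ℤ M} {a : M} {c : ℤ} (hc : c ≠ 0) :
    c • a ∈ pcl S ↔ a ∈ pcl S := by
  constructor
  · rintro ⟨d, hd, hda⟩
    refine ⟨d * c, mul_ne_zero hd hc, ?_⟩
    rwa [mul_smul]
  · intro h; exact (pcl S).smul_mem c h

lemma pcl_le_pcl_of_le_pcl {S S' : Submodule ℤ M} (h : S ≤ pcl S') : pcl S ≤ pcl S' := by
  rintro a ⟨c, hc, hca⟩
  exact (smul_mem_pcl_iff hc).mp (h hca)

lemma pcl_bot [NoZeroSMulDivisors ℤ M] : pcl (⊥ : Submodule ℤ M) = ⊥ := by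
  apply le_antisymm _ (le_pcl _)
  rintro a ⟨c, hc, hca⟩
  simp only [mem_bot] at *
  rcases smul_eq_zero.mp hca with h | h
  · exact absurd h hc
  · exact h

end PCL

section DivLemma

/-- In a free module, if `x` is divisible by unbounded integers modulo a f.g.
submodule `span sgen`, then some nonzero multiple of `x` lies in `span sgen`. -/
theorem divlemma {F : Type*} [AddCommGroup F] [Module.Free ℤ F]
    (sgen : Finset F) (x : F) (Kp : ℕ → ℤ)
    (hK : ∀ C : ℤ, C ≠ 0 → ∃ n, ¬ (Kp n ∣ C))
    (hx : ∀ n, ∃ y, x - Kp n • y ∈ span ℤ (sgen : Set F)) :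
    ∃ c : ℤ, c ≠ 0 ∧ c • x ∈ span ℤ (sgen : Set F) := by
  classical
  set B := Module.Free.chooseBasis ℤ F with hB
  set J : Finset (Module.Free.ChooseBasisIndex ℤ F) :=
    (B.repr x).support ∪ sgen.biUnion (fun g => (B.repr g).support) with hJ
  -- the submodule of J-supported elements
  set SJ : Submodule ℤ F :=
    (Finsupp.supported ℤ ℤ (J : Set (Module.Free.ChooseBasisIndex ℤ F))).comap
      (B.repr : F ≃ₗ[ℤ] _).toLinearMap with hSJ
  have hmemSJ : ∀ f : F, f ∈ SJ ↔ ∀ i ∈ (B.repr f).support, i ∈ J := by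
    intro f
    constructor
    · intro h i hi
      exact Finsupp.mem_supported ℤ _ |>.mp h hi
    · intro h
      exact Finsupp.mem_supported ℤ _ |>.mpr (fun i hi => h i hi)
  have hxSJ : x ∈ SJ := by
    rw [hmemSJ]
    intro i hi
    exact Finset.mem_union_left _ hi
  have hgenSJ : span ℤ (sgen : Set F) ≤ SJ := by
    rw [span_le]
    intro g hg
    rw [SetLike.mem_coe, hmemSJ]
    intro i hi
    exact Finset.mem_union_right _ (Finset.mem_biUnion.mpr ⟨g, hg, hi⟩)
  set θ : F →ₗ[ℤ] (J → ℤ) := LinearMap.pi (fun i => B.coord i.1) with hθ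
  have hθapp : ∀ (f : F) (i : J), θ f i = B.repr f i.1 := by
    intro f i; simp [hθ, Module.Basis.coord]
  have hθinj : ∀ f ∈ SJ, θ f = 0 → f = 0 := by
    intro f hf h0
    have hrf : B.repr f = 0 := by
      ext i
      by_cases hi : i ∈ J
      · have := congrFun h0 ⟨i, hi⟩
        rw [hθapp] at this
        simpa using this
      · by_contra hne
        rw [hmemSJ] at hf
        exact hi (hf i (Finsupp.mem_support_iff.mpr hne))
    have := congrArg B.repr.symm hrf
    simpa using this
  -- pass to the quotient of ℤ^J by the saturation of the image of sgen
  set Hs : Submodule ℤ (J → ℤ) := pcl (span ℤ (θ '' (sgen : Set F))) with hHs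
  have hfree : Module.Free ℤ ((J → ℤ) ⧸ Hs) := by
    have hnz : NoZeroSMulDivisors ℤ ((J → ℤ) ⧸ Hs) := by
      constructor
      intro c q hcq
      by_cases hc : c = 0
      · exact Or.inl hc
      · right
        obtain ⟨v, rfl⟩ := Submodule.Quotient.mk_surjective Hs q
        rw [← Submodule.Quotient.mk_smul, Submodule.Quotient.mk_eq_zero] at hcq
        rw [Submodule.Quotient.mk_eq_zero]
        exact (smul_mem_pcl_iff hc).mp hcq
    exact Module.free_of_finite_type_torsion_free'
  have hfin : Module.Finite ℤ ((J → ℤ) ⧸ Hs) := Module.Finite.of_surjective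
    (Hs.mkQ) (Submodule.Quotient.mk_surjective Hs)
  -- the class of θ x is divisible by all Kp n
  have hdvd : ∀ n, ∃ q, Hs.mkQ (θ x) = Kp n • q := by
    intro n
    obtain ⟨y, hy⟩ := hx n
    refine ⟨Hs.mkQ (θ y), ?_⟩
    have : θ x - Kp n • θ y ∈ Hs := by
      have h1 : θ (x - Kp n • y) ∈ span ℤ (θ '' (sgen : Set F)) := by
        rw [← Submodule.map_span, Submodule.mem_map]
        exact ⟨_, hy, rfl⟩
      have h2 : θ (x - Kp n • y) = θ x - Kp n • θ y := by
        rw [map_sub, map_smul]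
      rw [h2] at h1
      exact le_pcl _ h1
    rw [← map_smul, ← sub_eq_zero, ← map_sub, Submodule.mkQ_apply,
      Submodule.Quotient.mk_eq_zero]
    exact this
  have hx0 : Hs.mkQ (θ x) = 0 := by
    set BQ := Module.Free.chooseBasis ℤ ((J → ℤ) ⧸ Hs) with hBQ
    have hco : ∀ i, BQ.repr (Hs.mkQ (θ x)) i = 0 := by
      intro i
      by_contra hne
      obtain ⟨n, hn⟩ := hK _ hne
      obtain ⟨q, hq⟩ := hdvd n
      apply hn
      rw [hq, map_smul]
      exact ⟨BQ.repr q i, rfl⟩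
    have : BQ.repr (Hs.mkQ (θ x)) = 0 := by ext i; exact hco i
    have := congrArg BQ.repr.symm this
    simpa using this
  -- conclude
  rw [Submodule.mkQ_apply, Submodule.Quotient.mk_eq_zero, hHs] at hx0
  obtain ⟨c, hc, hcx⟩ := hx0
  rw [← map_smul, ← Submodule.map_span, Submodule.mem_map] at hcx
  obtain ⟨h, hh, hhe⟩ := hcx
  refine ⟨c, hc, ?_⟩
  have : c • x - h ∈ SJ := sub_mem (SJ.smul_mem c hxSJ) (hgenSJ hh)
  have hz : c • x - h = 0 := hθinj _ this (by rw [map_sub, hhe, sub_self])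
  rw [sub_eq_zero] at hz
  rw [hz]
  exact hh

section Pontryagin

variable {A : Type*} [AddCommGroup A] [Countable A] [NoZeroSMulDivisors ℤ A]

theorem pontryagin
    (H : ∀ s : Finset A, (pcl (span ℤ (s : Set A))).FG) : Module.Free ℤ A := by
  classical
  have : Nonempty A := ⟨0⟩
  obtain ⟨e, he⟩ := exists_surjective_nat A
  set An : ℕ → Submodule ℤ A :=
    fun n => pcl (span ℤ ((Finset.image e (Finset.range n)) : Set A)) with hAn
  have hmono : ∀ {m n}, m ≤ n → An m ≤ An n := by
    intro m n hmn
    exact pcl_mono (span_mono (by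
      intro a ha
      simp only [Finset.coe_image, Set.mem_image] at ha ⊢
      obtain ⟨i, hi, rfl⟩ := ha
      exact ⟨i, by simp only [Finset.mem_coe, Finset.mem_range] at hi ⊢; omega, rfl⟩))
  have hfg : ∀ n, (An n).FG := fun n => H _
  have hfint : ∀ n, Module.Finite ℤ (An n) := fun n => Module.Finite.iff_fg.mpr (hfg n)
  have hfree : ∀ n, Module.Free ℤ (An n) := by
    intro n
    have := hfint n
    exact Module.free_of_finite_type_torsion_free'
  -- quotients
  set Nn : ∀ n, Submodule ℤ (An (n+1)) :=
    fun n => (An n).comap (An (n+1)).subtype with hNn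
  have hNmem : ∀ n (v : An (n+1)), v ∈ Nn n ↔ (v : A) ∈ An n := fun n v => Iff.rfl
  set Qn : ℕ → Type _ := fun n => (An (n+1)) ⧸ (Nn n) with hQn
  have hQtf : ∀ n, NoZeroSMulDivisors ℤ (Qn n) := by
    intro n
    constructor
    intro c q hcq
    by_cases hc : c = 0
    · exact Or.inl hc
    · right
      obtain ⟨v, rfl⟩ := Submodule.Quotient.mk_surjective _ q
      rw [← Submodule.Quotient.mk_smul, Submodule.Quotient.mk_eq_zero] at hcq
      rw [Submodule.Quotient.mk_eq_zero]
      rw [hNmem] at hcq ⊢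
      have : (c : ℤ) • (v : A) ∈ An n := by
        simpa using hcq
      exact (smul_mem_pcl_iff hc).mp this
  have hQfin : ∀ n, Module.Finite ℤ (Qn n) := by
    intro n
    have := hfint (n+1)
    exact Module.Finite.of_surjective (Nn n).mkQ (Submodule.Quotient.mk_surjective _)
  have hQfree : ∀ n, Module.Free ℤ (Qn n) := by
    intro n
    have h1 := hQtf n
    have h2 := hQfin n
    exact Module.free_of_finite_type_torsion_free'
  -- choose finite bases of the quotients and lift
  set κ : ℕ → Type _ := fun n => Module.Free.ChooseBasisIndex ℤ (Qn n) with hκ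
  haveI hκfin : ∀ n, Fintype (κ n) := by
    intro n
    have h1 := hQfin n
    have h2 := hQfree n
    infer_instance
  set bq : ∀ n, Module.Basis (κ n) ℤ (Qn n) := fun n => Module.Free.chooseBasis ℤ (Qn n) with hbq
  have hlift : ∀ n (j : κ n), ∃ v : An (n+1), Submodule.Quotient.mk v = bq n j := by
    intro n j
    exact Submodule.Quotient.mk_surjective _ _
  choose vfun hvfun using hlift
  -- the global family of sets
  set SetS : ℕ → Set A := fun N => ⋃ (m : ℕ) (_ : m < N), Set.range (fun j => (vfun m j : A))
    with hSetS
  have hSetSmono : Monotone SetS := by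
    intro m n hmn
    intro a ha
    simp only [SetS, Set.mem_iUnion] at ha ⊢
    obtain ⟨i, hi, hr⟩ := ha
    exact ⟨i, lt_of_lt_of_le hi hmn, hr⟩
  have hSetSsub : ∀ N, SetS N ⊆ (An N : Set A) := by
    intro N a ha
    simp only [SetS, Set.mem_iUnion] at ha
    obtain ⟨m, hm, j, rfl⟩ := ha
    exact hmono hm (vfun m j).2
  -- span property
  have hspan : ∀ N, An N ≤ span ℤ (SetS N) := by
    intro N
    induction N with
    | zero =>
      have : An 0 = ⊥ := by
        rw [hAn]
        simp only [Finset.range_zero, Finset.image_empty, Finset.coe_empty, span_empty]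
        exact pcl_bot
      rw [this]; exact bot_le
    | succ n ih =>
      intro a ha
      set aa : An (n+1) := ⟨a, ha⟩ with haa
      have hrepr : Submodule.Quotient.mk aa = ∑ j : κ n, ((bq n).repr (Submodule.Quotient.mk aa)) j • bq n j := by
        exact ((bq n).sum_repr (Submodule.Quotient.mk aa)).symm
      set csum : An (n+1) := ∑ j : κ n, ((bq n).repr (Submodule.Quotient.mk aa)) j • vfun n j
        with hcsum
      have hmksum : ∀ (c : κ n → ℤ), (Submodule.Quotient.mk (∑ j : κ n, c j • vfun n j) : Qn n) = ∑ j : κ n, c j • bq n j := by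
        intro c
        have h0 : (Submodule.Quotient.mk (∑ j : κ n, c j • vfun n j) : Qn n)
            = (Nn n).mkQ (∑ j : κ n, c j • vfun n j) := rfl
        rw [h0, map_sum]
        simp only [map_smul, Submodule.mkQ_apply, hvfun]
      have hdiff : aa - csum ∈ Nn n := by
        rw [← Submodule.Quotient.mk_eq_zero, Submodule.Quotient.mk_sub]
        rw [hcsum, hmksum]
        rw [← hrepr]
        simp
      have h1 : (aa : A) - (csum : A) ∈ An n := hdiff
      have h2 : ((aa : A) - (csum : A)) ∈ span ℤ (SetS (n+1)) :=
        span_mono (hSetSmono (Nat.le_succ n)) (ih h1)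
      have h3 : (csum : A) ∈ span ℤ (SetS (n+1)) := by
        rw [hcsum]
        push_cast
        apply sum_mem
        intro j _
        apply smul_mem
        apply subset_span
        simp only [SetS, Set.mem_iUnion]
        exact ⟨n, Nat.lt_succ_self n, j, rfl⟩
      have := add_mem h2 h3
      simpa using this
  have hspantop : span ℤ (⋃ N, SetS N) = ⊤ := by
    rw [eq_top_iff]
    intro a _
    obtain ⟨n, rfl⟩ := he a
    have : e n ∈ An (n+1) := by
      apply le_pcl
      apply subset_span
      simp only [Finset.coe_image, Set.mem_image]
      exact ⟨n, by simp, rfl⟩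
    have := hspan (n+1) this
    exact span_mono (Set.subset_iUnion SetS (n+1)) this
  -- independence
  have hindep : ∀ N, LinearIndependent ℤ (fun x : SetS N => (x : A)) := by
    intro N
    induction N with
    | zero =>
      have : SetS 0 = ∅ := by simp [SetS]
      rw [this]
      exact linearIndependent_empty_type
    | succ n ih =>
      have hsplit : SetS (n+1) = SetS n ∪ Set.range (fun j => (vfun n j : A)) := by
        ext a
        simp only [SetS, Set.mem_iUnion, Set.mem_union]
        constructor
        · rintro ⟨m, hm, hr⟩
          rcases Nat.lt_succ_iff_lt_or_eq.mp hm with h | rfl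
          · exact Or.inl ⟨m, h, hr⟩
          · exact Or.inr hr
        · rintro (⟨m, hm, hr⟩ | hr)
          · exact ⟨m, Nat.lt_succ_of_lt hm, hr⟩
          · exact ⟨n, Nat.lt_succ_self n, hr⟩
      rw [hsplit]
      -- the level-n family is independent
      have hlin : LinearIndependent ℤ (fun j : κ n => (vfun n j : A)) := by
        have h1 : LinearIndependent ℤ (bq n) := (bq n).linearIndependent
        have h2 : LinearIndependent ℤ (fun j => Submodule.Quotient.mk (p := Nn n) (vfun n j)) := by
          convert h1 using 2
          exact hvfun n _
        have h3 : LinearIndependent ℤ (vfun n) := by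
          exact h2.of_comp (Nn n).mkQ
        exact h3.map' (An (n+1)).subtype (ker_subtype _)
      -- disjointness of spans
      have hdisj : Disjoint (span ℤ (SetS n)) (span ℤ (Set.range (fun j => (vfun n j : A)))) := by
        rw [disjoint_def]
        intro a haS haR
        rw [mem_span_range_iff_exists_fun] at haR
        obtain ⟨c, hc⟩ := haR
        have haAn : a ∈ An n := (span_le.mpr (hSetSsub n)) haS
        set aa : An (n+1) := ⟨a, hmono (Nat.le_succ n) haAn⟩ with haa
        have hsum : (∑ j : κ n, c j • vfun n j : An (n+1)) = aa := by
          apply Subtype.ext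
          push_cast
          exact hc
        have hmksum : ∀ (cc : κ n → ℤ), (Submodule.Quotient.mk (∑ j : κ n, cc j • vfun n j) : Qn n) = ∑ j : κ n, cc j • bq n j := by
          intro cc
          have h0 : (Submodule.Quotient.mk (∑ j : κ n, cc j • vfun n j) : Qn n)
              = (Nn n).mkQ (∑ j : κ n, cc j • vfun n j) := rfl
          rw [h0, map_sum]
          simp only [map_smul, Submodule.mkQ_apply, hvfun]
        have hq : (∑ j : κ n, c j • bq n j : Qn n) = 0 := by
          have h0 : Submodule.Quotient.mk aa = (0 : Qn n) := by
            rw [Submodule.Quotient.mk_eq_zero]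
            exact haAn
          rw [← hmksum, hsum, h0]
        have hc0 : ∀ j, c j = 0 := by
          have h1 := (bq n).linearIndependent
          rw [Fintype.linearIndependent_iff] at h1
          exact h1 c hq
        rw [← hc]
        simp [hc0]
      exact LinearIndepOn.id_union ih hlin.linearIndepOn_id hdisj
  have hindepU : LinearIndependent ℤ (fun x : (⋃ N, SetS N) => (x : A)) := by
    apply linearIndepOn_iUnion_of_directed (v := id)
    · intro m n
      exact ⟨max m n, hSetSmono (le_max_left _ _), hSetSmono (le_max_right _ _)⟩
    · exact hindep
  exact Module.Free.of_basis (Module.Basis.mk hindepU (by rw [Subtype.range_coe]; rw [hspantop]))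

end Pontryagin

section Chain

variable {A : Type*} [AddCommGroup A] [Countable A] [NoZeroSMulDivisors ℤ A]

theorem exists_chain (hnf : ¬ Module.Free ℤ A) :
    ∃ (d : ℕ) (τ : Fin d → A) (a : ℕ → A) (k : ℕ → ℤ) (s : ℕ → Fin d → ℤ),
      (∀ n, 2 ≤ k n) ∧
      (∀ n, k n • a (n+1) = a n + ∑ j, s n j • τ j) ∧
      (∀ M : ℤ, M ≠ 0 → M • a 0 ∉ span ℤ (Set.range τ)) := by
  classical
  -- some finite family with non-f.g. pure closure
  have hex : ∃ n : ℕ, ∃ v : Fin n → A, ¬ (pcl (span ℤ (Set.range v))).FG := by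
    by_contra hcon
    push_neg at hcon
    apply hnf
    apply pontryagin
    intro s
    obtain ⟨v, hv⟩ : ∃ v : Fin s.card → A, Set.range v = (s : Set A) := by
      have e := s.equivFin
      exact ⟨fun i => (e.symm i : A), by
        ext a
        constructor
        · rintro ⟨i, rfl⟩; exact (e.symm i).2
        · intro ha; exact ⟨e ⟨a, ha⟩, by simp⟩⟩
    have hfg := hcon s.card v
    rwa [hv] at hfg
  obtain ⟨n₀, v, hv, hmin⟩ : ∃ n₀, ∃ v : Fin n₀ → A, ¬ (pcl (span ℤ (Set.range v))).FG ∧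
      ∀ m, m < n₀ → ∀ v' : Fin m → A, (pcl (span ℤ (Set.range v'))).FG := by
    obtain ⟨v, hv⟩ := Nat.find_spec hex
    refine ⟨Nat.find hex, v, hv, ?_⟩
    intro m hm v'
    have := Nat.find_min hex hm
    push_neg at this
    exact this v'
  -- n₀ > 0
  obtain ⟨n', rfl⟩ : ∃ n', n₀ = n' + 1 := by
    rcases Nat.eq_zero_or_pos n₀ with h | h
    · exfalso
      apply hv
      have : Set.range v = ∅ := by
        rw [Set.range_eq_empty_iff]
        constructor
        intro i
        have := i.2
        omega
      rw [this, span_empty, pcl_bot]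
      exact Submodule.fg_bot
    · exact ⟨n₀ - 1, by omega⟩
  -- v is linearly independent
  have hli : LinearIndependent ℤ v := by
    by_contra hnli
    rw [Fintype.not_linearIndependent_iff] at hnli
    obtain ⟨g, hg, j, hj⟩ := hnli
    set v' : Fin n' → A := v ∘ j.succAbove with hv'
    have heq : pcl (span ℤ (Set.range v)) = pcl (span ℤ (Set.range v')) := by
      apply le_antisymm
      · apply pcl_le_pcl_of_le_pcl
        rw [span_le]
        rintro x ⟨i, rfl⟩
        by_cases hij : i = j
        · subst hij
          refine ⟨g i, hj, ?_⟩
          have hsum : g i • v i = - ∑ l ∈ Finset.univ.erase i, g l • v l := by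
            rw [eq_neg_iff_add_eq_zero,
              Finset.add_sum_erase _ (fun l => g l • v l) (Finset.mem_univ i)]
            exact hg
          rw [hsum]
          apply neg_mem
          apply sum_mem
          intro l hl
          apply smul_mem
          apply subset_span
          obtain ⟨i', rfl⟩ := Fin.exists_succAbove_eq (Finset.ne_of_mem_erase hl)
          exact ⟨i', rfl⟩
        · apply le_pcl
          apply subset_span
          obtain ⟨i', rfl⟩ := Fin.exists_succAbove_eq hij
          exact ⟨i', rfl⟩
      · apply pcl_mono
        apply span_mono
        rintro x ⟨i, rfl⟩
        exact ⟨j.succAbove i, rfl⟩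
    apply hv
    rw [heq]
    exact hmin n' (Nat.lt_succ_self n') v'
  -- define P and T
  set P := pcl (span ℤ (Set.range v)) with hP
  set T := pcl (span ℤ (Set.range (v ∘ Fin.succ))) with hT
  have hTfg : T.FG := hmin n' (Nat.lt_succ_self n') (v ∘ Fin.succ)
  have hTP : T ≤ P := by
    apply pcl_mono
    apply span_mono
    rintro x ⟨i, rfl⟩
    exact ⟨(Fin.succ i), rfl⟩
  set NT : Submodule ℤ P := T.comap P.subtype with hNT
  set R := (↥P) ⧸ NT with hR
  -- R is not finitely generated
  have hRnf : ¬ Module.Finite ℤ R := by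
    intro hRf
    apply hv
    rw [← Module.Finite.iff_fg]
    have htop : (⊤ : Submodule ℤ (↥P)).FG := by
      apply Submodule.fg_of_fg_map_of_fg_inf_ker NT.mkQ
      · rw [Submodule.map_top, Submodule.range_mkQ]
        exact Module.finite_def.mp hRf
      · rw [Submodule.ker_mkQ, top_inf_eq]
        have h1 : Module.Finite ℤ T := Module.Finite.iff_fg.mpr hTfg
        have h2 : Module.Finite ℤ NT :=
          Module.Finite.equiv (Submodule.comapSubtypeEquivOfLe hTP).symm
        exact Module.Finite.iff_fg.mp h2
    exact Module.finite_def.mpr htop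
  -- R is torsion-free
  haveI hRtf : NoZeroSMulDivisors ℤ R := by
    constructor
    intro c q hcq
    by_cases hc : c = 0
    · exact Or.inl hc
    · right
      obtain ⟨p, rfl⟩ := Submodule.Quotient.mk_surjective _ q
      rw [← Submodule.Quotient.mk_smul, Submodule.Quotient.mk_eq_zero] at hcq
      rw [Submodule.Quotient.mk_eq_zero]
      have : c • (p : A) ∈ T := hcq
      have : (p : A) ∈ T := by
        rw [hT] at this ⊢
        exact (smul_mem_pcl_iff hc).mp this
      exact this
  -- any two elements of R satisfy a nontrivial relation
  have hdep : ∀ x y : R, ∃ c e : ℤ, ¬(c = 0 ∧ e = 0) ∧ c • x + e • y = 0 := by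
    intro x y
    obtain ⟨pp, rfl⟩ := Submodule.Quotient.mk_surjective _ x
    obtain ⟨qq, rfl⟩ := Submodule.Quotient.mk_surjective _ y
    obtain ⟨Mp, hMp, hMpmem⟩ := pp.2
    obtain ⟨Mq, hMq, hMqmem⟩ := qq.2
    set L := span ℤ (Set.range v) with hL
    set u : (Fin 2) ⊕ (Fin n') → L :=
      Sum.elim (fun i => if i = 0 then ⟨Mp • (pp : A), hMpmem⟩ else ⟨Mq • (qq : A), hMqmem⟩)
        (fun i => ⟨v i.succ, subset_span ⟨i.succ, rfl⟩⟩) with hu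
    have hnu : ¬ LinearIndependent ℤ u := by
      intro hind
      have hbL : Module.Basis (Fin (n' + 1)) ℤ L := Module.Basis.span hli
      have := hbL.card_le_card_of_linearIndependent hind
      simp only [Fintype.card_sum, Fintype.card_fin] at this
      omega
    rw [Fintype.not_linearIndependent_iff] at hnu
    obtain ⟨g, hg, i₀, hi₀⟩ := hnu
    have hgA : g (Sum.inl 0) • (Mp • (pp : A)) + g (Sum.inl 1) • (Mq • (qq : A))
        + ∑ i : Fin n', g (Sum.inr i) • v i.succ = 0 := by
      have := congrArg (Submodule.subtype L) hg
      rw [map_sum, map_zero] at this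
      rw [← this]
      rw [Fintype.sum_sum_type]
      simp only [map_smul]
      congr 1
      rw [Fin.sum_univ_two]
      simp [hu]
    by_cases hz : g (Sum.inl 0) = 0 ∧ g (Sum.inl 1) = 0
    · exfalso
      rw [hz.1, hz.2] at hgA
      simp only [zero_smul, zero_add] at hgA
      have hlitail : LinearIndependent ℤ (v ∘ Fin.succ) :=
        hli.comp Fin.succ (Fin.succ_injective n')
      rw [Fintype.linearIndependent_iff] at hlitail
      rcases i₀ with i | i
      · apply absurd _ hi₀
        fin_cases i <;> simp [hz.1, hz.2]
      · exact hi₀ (hlitail (fun i => g (Sum.inr i)) hgA i)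
    · refine ⟨g (Sum.inl 0) * Mp, g (Sum.inl 1) * Mq, ?_, ?_⟩
      · intro ⟨h1, h2⟩
        rcases mul_eq_zero.mp h1 with h | h
        · rcases mul_eq_zero.mp h2 with h' | h'
          · exact hz ⟨h, h'⟩
          · exact hMq h'
        · exact hMp h
      · rw [← Submodule.Quotient.mk_smul, ← Submodule.Quotient.mk_smul,
          ← Submodule.Quotient.mk_add, Submodule.Quotient.mk_eq_zero]
        have : (g (Sum.inl 0) * Mp) • (pp : A) + (g (Sum.inl 1) * Mq) • (qq : A) ∈ T := by
          rw [mul_smul, mul_smul]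
          have hsum : g (Sum.inl 0) • (Mp • (pp : A)) + g (Sum.inl 1) • (Mq • (qq : A))
              = - ∑ i : Fin n', g (Sum.inr i) • v i.succ := by
            rw [eq_neg_iff_add_eq_zero]
            exact hgA
          rw [hsum]
          apply neg_mem
          apply le_pcl
          apply sum_mem
          intro i _
          apply smul_mem
          apply subset_span
          exact ⟨i, rfl⟩
        exact this
  -- divisibility step
  have hdiv : ∀ x : R, x ≠ 0 → ∃ (kk : ℤ) (y : R), 2 ≤ kk ∧ kk • y = x := by
    intro x hx
    by_contra hno
    push_neg at hno
    apply hRnf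
    have hspanx : ∀ y : R, y ∈ span ℤ ({x} : Set R) := by
      intro y
      obtain ⟨c, e, hce, hrel⟩ := hdep y x
      have hc : c ≠ 0 := by
        intro hc0
        subst hc0
        simp only [zero_smul, zero_add] at hrel
        rcases smul_eq_zero.mp hrel with h | h
        · exact hce ⟨rfl, h⟩
        · exact hx h
      -- wlog c > 0
      obtain ⟨c, e, hc, hrel⟩ : ∃ c e : ℤ, 0 < c ∧ c • y = e • x := by
        rcases lt_or_gt_of_ne hc with h | h
        · refine ⟨-c, e, by omega, ?_⟩
          rw [neg_smul, neg_eq_iff_add_eq_zero]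
          exact hrel
        · refine ⟨c, -e, h, ?_⟩
          rw [neg_smul, eq_neg_iff_add_eq_zero]
          exact hrel
      set g : ℤ := (Int.gcd c e : ℤ) with hgdef
      have hgnat : Int.gcd c e ≠ 0 := by
        intro h0
        have := (Int.gcd_eq_zero_iff.mp h0).1
        omega
      have hgpos : (0:ℤ) < g := by
        rw [hgdef]
        exact_mod_cast Nat.pos_of_ne_zero hgnat
      obtain ⟨c', hc'⟩ : (g : ℤ) ∣ c := Int.gcd_dvd_left c e
      obtain ⟨e', he'⟩ : (g : ℤ) ∣ e := Int.gcd_dvd_right c e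
      have hrel' : c' • y = e' • x := by
        have : g • (c' • y - e' • x) = 0 := by
          rw [smul_sub, ← mul_smul, ← mul_smul, ← hc', ← he', sub_eq_zero]
          exact hrel
        rcases smul_eq_zero.mp this with h | h
        · omega
        · rwa [sub_eq_zero] at h
      have hc'pos : 0 < c' := by
        nlinarith [hgpos, hc, hc']
      have hcop : Int.gcd c' e' = 1 := by
        have hgne : g ≠ 0 := by omega
        have h1 : c / g = c' := by rw [hc', Int.mul_ediv_cancel_left _ hgne]
        have h2 : e / g = e' := by rw [he', Int.mul_ediv_cancel_left _ hgne]
        rw [← h1, ← h2, hgdef]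
        exact Int.gcd_div_gcd_div_gcd (Nat.pos_of_ne_zero hgnat)
      -- Bezout
      have hbez : (1:ℤ) = c' * Int.gcdA c' e' + e' * Int.gcdB c' e' := by
        have := Int.gcd_eq_gcd_ab c' e'
        rw [hcop] at this
        exact_mod_cast this
      set z : R := Int.gcdB c' e' • y + Int.gcdA c' e' • x with hz
      have hc'z : c' • z = x := by
        rw [hz, smul_add, ← mul_smul, ← mul_smul]
        have h1 : (c' * Int.gcdB c' e') • y = (Int.gcdB c' e' * c') • y := by ring_nf
        rw [h1, mul_smul, hrel', ← mul_smul, ← add_smul]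
        have : Int.gcdB c' e' * e' + c' * Int.gcdA c' e' = 1 := by
          rw [mul_comm (Int.gcdB c' e') e']
          linarith [hbez]
        rw [this, one_smul]
      have hc'1 : c' = 1 := by
        by_contra hne
        have : 2 ≤ c' := by omega
        exact (hno c' z this) hc'z
      rw [hc'1, one_smul] at hrel'
      rw [hrel']
      exact smul_mem _ _ (mem_span_singleton_self x)
    rw [Module.finite_def]
    refine ⟨{x}, ?_⟩
    rw [eq_top_iff]
    intro y _
    simpa using hspanx y
  -- a nonzero element
  obtain ⟨x₀, hx₀⟩ : ∃ x : R, x ≠ 0 := by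
    by_contra h
    push_neg at h
    apply hRnf
    rw [Module.finite_def]
    refine ⟨∅, ?_⟩
    rw [eq_top_iff]
    intro y _
    rw [h y]
    exact zero_mem _
  -- build the chain in R
  have hstep : ∀ z : {z : R // z ≠ 0}, ∃ w : ℤ × {z : R // z ≠ 0}, 2 ≤ w.1 ∧ w.1 • (w.2 : R) = (z : R) := by
    rintro ⟨z, hz⟩
    obtain ⟨kk, y, hkk, hky⟩ := hdiv z hz
    have hy : y ≠ 0 := by
      intro h
      rw [h, smul_zero] at hky
      exact hz hky.symm
    exact ⟨(kk, ⟨y, hy⟩), hkk, hky⟩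
  choose stf hst1 hst2 using hstep
  set rseq : ℕ → {z : R // z ≠ 0} := fun n => Nat.rec ⟨x₀, hx₀⟩ (fun _ prev => (stf prev).2) n
    with hrseq
  set kseq : ℕ → ℤ := fun n => (stf (rseq n)).1 with hkseq
  have hrrel : ∀ n, kseq n • ((rseq (n+1) : R)) = (rseq n : R) := by
    intro n
    have : rseq (n+1) = (stf (rseq n)).2 := rfl
    rw [this]
    exact hst2 (rseq n)
  -- lift to A
  have hliftP : ∀ z : R, ∃ p : ↥P, Submodule.Quotient.mk p = z :=
    fun z => Submodule.Quotient.mk_surjective _ z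
  choose lp hlp using hliftP
  set aseq : ℕ → A := fun n => (lp (rseq n) : A) with haseq
  have hTmem : ∀ n, kseq n • aseq (n+1) - aseq n ∈ T := by
    intro n
    have : Submodule.Quotient.mk (kseq n • lp (rseq (n+1)) - lp (rseq n)) = (0 : R) := by
      rw [Submodule.Quotient.mk_sub, Submodule.Quotient.mk_smul, hlp, hlp, hrrel, sub_self]
    rw [Submodule.Quotient.mk_eq_zero] at this
    exact this
  -- generators of T
  obtain ⟨Tg, hTg⟩ := hTfg
  set d := Tg.card with hd
  obtain ⟨τ, hτ⟩ : ∃ τ : Fin d → A, Set.range τ = (Tg : Set A) := by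
    have e := Tg.equivFin
    exact ⟨fun i => (e.symm i : A), by
      ext a
      constructor
      · rintro ⟨i, rfl⟩; exact (e.symm i).2
      · intro ha; exact ⟨e ⟨a, ha⟩, by simp⟩⟩
  have hspanτ : span ℤ (Set.range τ) = T := by rw [hτ, hTg]
  have hcoeff : ∀ n, ∃ s : Fin d → ℤ, ∑ j, s j • τ j = kseq n • aseq (n+1) - aseq n := by
    intro n
    have := hTmem n
    rw [← hspanτ, mem_span_range_iff_exists_fun] at this
    exact this
  choose sfun hsfun using hcoeff
  refine ⟨d, τ, aseq, kseq, sfun, ?_, ?_, ?_⟩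
  · intro n
    exact hst1 (rseq n)
  · intro n
    rw [hsfun n]
    ring_nf
    abel
  · intro M hM hmem
    rw [hspanτ] at hmem
    have : Submodule.Quotient.mk (M • lp (rseq 0)) = (0 : R) := by
      rw [Submodule.Quotient.mk_eq_zero]
      exact hmem
    rw [Submodule.Quotient.mk_smul, hlp] at this
    rcases smul_eq_zero.mp this with h | h
    · exact hM h
    · have : (rseq 0 : R) ≠ 0 := (rseq 0).2
      exact this h

end Chain

section Main

/-- Let `A` be a countable, torsion-free, nonfree abelian group, let
`0 → K → F → A → 0` be a free resolution of `A` (with `K`, `F` free abelian groups,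
`K` embedded in `F` via the injective map `ι`, and `π : F → A` surjective with kernel
the image of `K`), and let `b` be a basis of `K`.  Then there is a homomorphism
`φ : K → ℤ` that does not extend to any homomorphism `ψ : F → ℤ`, with
`φ t ∈ {0, 1}` for every basis element `t` of `K`. -/
theorem stmt5 (A K F : Type) [AddCommGroup A] [AddCommGroup K] [AddCommGroup F]
    [Countable A]
    (htf : ∀ (n : ℤ) (a : A), n ≠ 0 → n • a = 0 → a = 0)
    (hnonfree : ¬ Module.Free ℤ A)
    (hFfree : Module.Free ℤ F)
    (ιK : Type) (b : Module.Basis ιK ℤ K)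
    (ι : K →+ F) (π : F →+ A)
    (hinj : Function.Injective ι) (hsurj : Function.Surjective π)
    (hexact : ι.range = π.ker) :
    ∃ φ : K →+ ℤ,
      (¬ ∃ ψ : F →+ ℤ, ψ.comp ι = φ) ∧
      ∀ i : ιK, φ (b i) ∈ ({0, 1} : Set ℤ) := by
  classical
  haveI : NoZeroSMulDivisors ℤ A := by
    constructor
    intro c x hcx
    by_cases hc : c = 0
    · exact Or.inl hc
    · exact Or.inr (htf c x hc hcx)
  by_contra hcon
  push_neg at hcon
  have hext : ∀ φ : K →+ ℤ, (∀ i : ιK, φ (b i) ∈ ({0, 1} : Set ℤ)) →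
      ∃ ψ : F →+ ℤ, ψ.comp ι = φ := by
    intro φ hφ
    by_contra hn
    obtain ⟨i, hi⟩ := hcon φ (fun ψ hψ => hn ⟨ψ, hψ⟩)
    exact hi (hφ i)
  -- the chain
  obtain ⟨d, τ, a, k, s, hk2, hrel, ha0⟩ := exists_chain (A := A) hnonfree
  -- lifts
  set x : ℕ → F := fun n => Function.surjInv hsurj (a n) with hx
  have hπx : ∀ n, π (x n) = a n := fun n => Function.surjInv_eq hsurj (a n)
  set ρ : Fin d → F := fun j => Function.surjInv hsurj (τ j) with hρ
  have hπρ : ∀ j, π (ρ j) = τ j := fun j => Function.surjInv_eq hsurj (τ j)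
  set z : ℕ → F := fun n => x n + (∑ j, s n j • ρ j) - k n • x (n+1) with hz
  have hzker : ∀ n, π (z n) = 0 := by
    intro n
    rw [hz]
    simp only [map_sub, map_add, map_sum, AddMonoidHom.map_zsmul]
    simp only [hπx, hπρ]
    rw [← hrel n]
    abel
  have hwex : ∀ n, ∃ w : K, ι w = z n := by
    intro n
    have : z n ∈ ι.range := by
      rw [hexact]
      exact AddMonoidHom.mem_ker.mpr (hzker n)
    exact this
  choose w hw using hwex
  -- the products
  set Kp : ℕ → ℤ := fun n => Nat.rec 1 (fun m acc => acc * k m) n with hKpdef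
  have hKp0 : Kp 0 = 1 := rfl
  have hKps : ∀ n, Kp (n+1) = Kp n * k n := fun n => rfl
  have hKppos : ∀ n, 0 < Kp n := by
    intro n
    induction n with
    | zero => norm_num [hKp0]
    | succ m ih =>
      rw [hKps]
      have := hk2 m
      positivity
  have hKpdvd : ∀ m n, m ≤ n → Kp m ∣ Kp n := by
    intro m n hmn
    induction n with
    | zero =>
      have : m = 0 := by omega
      subst this
      exact dvd_rfl
    | succ l ih =>
      by_cases h : m = l + 1
      · subst h; exact dvd_rfl
      · rw [hKps]
        exact Dvd.dvd.mul_right (ih (by omega)) _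
  have hKpge : ∀ n, 2^n ≤ Kp n := by
    intro n
    induction n with
    | zero => norm_num [hKp0]
    | succ m ih =>
      rw [hKps, pow_succ]
      have h1 := hk2 m
      have h2 : (0:ℤ) < 2^m := by positivity
      nlinarith
  have hKbig : ∀ C : ℤ, C ≠ 0 → ∃ n, ¬ (Kp n ∣ C) := by
    intro C hC
    refine ⟨(C.natAbs + 1), ?_⟩
    intro hdvd
    have h1 : Kp (C.natAbs + 1) ≤ |C| := by
      apply Int.le_of_dvd (abs_pos.mpr hC)
      exact (dvd_abs _ _).mpr hdvd
    have h2 : (2:ℤ)^(C.natAbs + 1) ≤ Kp (C.natAbs + 1) := hKpge _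
    have h3 : (C.natAbs : ℤ) < 2^(C.natAbs + 1) := by
      have := Nat.lt_two_pow_self (n := C.natAbs + 1)
      calc (C.natAbs : ℤ) < ((C.natAbs + 1 : ℕ) : ℤ) := by exact_mod_cast Nat.lt_succ_self _
        _ ≤ ((2^(C.natAbs+1) : ℕ) : ℤ) := by exact_mod_cast le_of_lt this
        _ = 2^(C.natAbs+1) := by push_cast; ring
    rw [Int.abs_eq_natAbs] at h1
    omega
  -- coefficients
  set Finn : ℕ → Finset ιK := fun n => (Finset.range n).biUnion (fun m => (b.repr (w m)).support)
    with hFinn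
  set G : ιK → ℕ → ℤ := fun i n => ∑ m ∈ Finset.range n, Kp m * (b.repr (w m) i) with hG
  have hFinnmono : ∀ {m n}, m ≤ n → Finn m ⊆ Finn n := by
    intro m n hmn
    apply Finset.biUnion_subset_biUnion_of_subset_left
    intro t ht
    rw [Finset.mem_range] at ht ⊢
    omega
  have hGzero : ∀ i n, i ∉ Finn n → G i n = 0 := by
    intro i n hi
    rw [hG]
    apply Finset.sum_eq_zero
    intro m hm
    have : i ∉ (b.repr (w m)).support := by
      intro hmem
      exact hi (Finset.mem_biUnion.mpr ⟨m, hm, hmem⟩)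
    rw [Finsupp.notMem_support_iff] at this
    rw [this, mul_zero]
  have hGmono : ∀ i m n, m ≤ n → ¬(Kp m ∣ G i m) → ¬(Kp n ∣ G i n) := by
    intro i m n hmn hnd hdn
    apply hnd
    have hsplit : G i n = G i m + ∑ t ∈ Finset.Ico m n, Kp t * (b.repr (w t) i) := by
      simp only [hG, Finset.range_eq_Ico]
      rw [← Finset.sum_Ico_consecutive _ (Nat.zero_le m) hmn]
    have hd2 : Kp m ∣ ∑ t ∈ Finset.Ico m n, Kp t * (b.repr (w t) i) := by
      apply Finset.dvd_sum
      intro t ht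
      rw [Finset.mem_Ico] at ht
      exact Dvd.dvd.mul_right (hKpdvd m t ht.1) _
    have hd3 : Kp m ∣ G i n := dvd_trans (hKpdvd m n hmn) hdn
    rw [hsplit] at hd3
    have := dvd_sub hd3 hd2
    simpa using this
  -- telescoping identity in F
  have hTel : ∀ n, ∑ m ∈ Finset.range n, Kp m • z m
      = x 0 + (∑ j, (∑ m ∈ Finset.range n, Kp m * s m j) • ρ j) - Kp n • x n := by
    intro n
    induction n with
    | zero =>
      simp [hKp0]
    | succ m ih =>
      rw [Finset.sum_range_succ, ih]
      have hzm : Kp m • z m = Kp m • x m + (∑ j, (Kp m * s m j) • ρ j)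
          - (Kp m * k m) • x (m+1) := by
        rw [hz]
        simp only [smul_sub, smul_add, Finset.smul_sum, ← mul_smul]
      rw [hzm]
      have hsum : ∀ j, (∑ t ∈ Finset.range (m+1), Kp t * s t j)
          = (∑ t ∈ Finset.range m, Kp t * s t j) + Kp m * s m j := by
        intro j
        rw [Finset.sum_range_succ]
      have hsum2 : (∑ j, (∑ t ∈ Finset.range (m+1), Kp t * s t j) • ρ j)
          = (∑ j, (∑ t ∈ Finset.range m, Kp t * s t j) • ρ j) + (∑ j, (Kp m * s m j) • ρ j) := by
        rw [← Finset.sum_add_distrib]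
        apply Finset.sum_congr rfl
        intro j _
        rw [hsum j, add_smul]
      rw [hsum2, hKps]
      abel
  -- extension congruence
  have hcong : ∀ (φ : K →+ ℤ) (ψ : F →+ ℤ), ψ.comp ι = φ → ∀ n,
      (∑ m ∈ Finset.range n, Kp m * φ (w m))
        = ψ (x 0) + (∑ j, (∑ m ∈ Finset.range n, Kp m * s m j) * ψ (ρ j)) - Kp n * ψ (x n) := by
    intro φ ψ hψ n
    have hψz : ∀ m, ψ (z m) = φ (w m) := by
      intro m
      rw [← hw m]
      exact DFunLike.congr_fun hψ (w m)
    have := congrArg ψ (hTel n)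
    rw [map_sum, map_sub, map_add, map_sum] at this
    simp only [AddMonoidHom.map_zsmul, smul_eq_mul, hψz] at this
    exact this
  -- expansion of φ on w's
  have hφex : ∀ (φ : K →+ ℤ) (y : K), φ y = ∑ i ∈ (b.repr y).support, (b.repr y i) * φ (b i) := by
    intro φ y
    conv_lhs => rw [← b.linearCombination_repr y]
    rw [Finsupp.linearCombination_apply, Finsupp.sum]
    rw [map_sum]
    apply Finset.sum_congr rfl
    intro i _
    rw [AddMonoidHom.map_zsmul, smul_eq_mul]
  have hmemspan : ∀ (y : K) (E : Finset ιK), (∀ i ∉ E, b.repr y i = 0) →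
      y ∈ span ℤ ((⇑b) '' (E : Set ιK)) := by
    intro y E hy
    have htot := b.linearCombination_repr y
    rw [← htot, Finsupp.linearCombination_apply, Finsupp.sum]
    apply sum_mem
    intro i hi
    apply smul_mem
    apply subset_span
    refine ⟨i, ?_, rfl⟩
    by_contra hniE
    rw [Finsupp.mem_support_iff] at hi
    exact hi (hy i hniE)
  have hswap : ∀ (φ : K →+ ℤ) n,
      ∑ m ∈ Finset.range n, Kp m * φ (w m) = ∑ i ∈ Finn n, G i n * φ (b i) := by
    intro φ n
    have h1 : ∀ m ∈ Finset.range n,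
        Kp m * φ (w m) = ∑ i ∈ Finn n, Kp m * (b.repr (w m) i) * φ (b i) := by
      intro m hm
      rw [hφex φ (w m), Finset.mul_sum]
      have hstep : (∑ i ∈ (b.repr (w m)).support, Kp m * ((b.repr (w m)) i * φ (b i)))
          = ∑ i ∈ (b.repr (w m)).support, Kp m * (b.repr (w m)) i * φ (b i) :=
        Finset.sum_congr rfl (fun i _ => by ring)
      rw [hstep]
      apply Finset.sum_subset (fun i hi => Finset.mem_biUnion.mpr ⟨m, hm, hi⟩)
      intro i _ hni
      rw [Finsupp.notMem_support_iff] at hni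
      rw [hni]
      ring
    rw [Finset.sum_congr rfl h1, Finset.sum_comm]
    apply Finset.sum_congr rfl
    intro i _
    rw [hG, Finset.sum_mul]
  -- the key dichotomy: (★★)
  have hstar : ∀ N, ∃ i, i ∉ Finn N ∧ ∃ n, ¬ (Kp n ∣ G i n) := by
    intro N
    by_contra hdeg
    push_neg at hdeg
    -- every coordinate outside Finn N has all partial sums divisible
    set E := Finn N with hE
    set sgen : Finset F :=
      (Finset.image (fun j => ρ j) Finset.univ) ∪ (Finset.image (fun i => ι (b i)) E)
      with hsgen
    have hxmem : ∀ n, ∃ y, x 0 - Kp n • y ∈ span ℤ (sgen : Set F) := by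
      intro n
      set Wn : K := ∑ m ∈ Finset.range n, Kp m • w m with hWn
      have hreprW : ∀ i, b.repr Wn i = G i n := by
        intro i
        rw [hWn, map_sum]
        rw [Finset.sum_apply']
        apply Finset.sum_congr rfl
        intro m _
        rw [map_smul]
        simp [smul_eq_mul]
      set Yn : K := ∑ i ∈ (b.repr Wn).support \ E, (G i n / Kp n) • b i with hYn
      set Dn : K := Wn - Kp n • Yn with hDn
      have hreprY : ∀ i, b.repr Yn i = if i ∈ (b.repr Wn).support \ E then G i n / Kp n else 0 := by
        intro i
        rw [hYn, map_sum, Finset.sum_apply']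
        by_cases hi : i ∈ (b.repr Wn).support \ E
        · rw [Finset.sum_eq_single i]
          · rw [map_smul, b.repr_self]
            simp [hi]
          · intro t _ hti
            rw [map_smul, b.repr_self]
            simp [Finsupp.single_apply, hti]
          · intro hni
            exact absurd hi hni
        · rw [if_neg hi]
          apply Finset.sum_eq_zero
          intro t ht
          rw [map_smul, b.repr_self]
          have hti : t ≠ i := fun h => hi (h ▸ ht)
          simp [Finsupp.single_apply, hti]
      have hDmem : Dn ∈ span ℤ ((⇑b) '' (E : Set ιK)) := by
        have hsupp : ∀ i, i ∉ E → b.repr Dn i = 0 := by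
          intro i hi
          rw [hDn, map_sub, map_smul, Finsupp.sub_apply, Finsupp.smul_apply,
            hreprW, hreprY, smul_eq_mul]
          by_cases hiW : i ∈ (b.repr Wn).support
          · have hcond : i ∈ (b.repr Wn).support \ E := Finset.mem_sdiff.mpr ⟨hiW, hi⟩
            rw [if_pos hcond]
            rw [Int.mul_ediv_cancel' (hdeg i hi n)]
            ring
          · have hcond : i ∉ (b.repr Wn).support \ E := by
              intro hmem
              exact hiW (Finset.mem_sdiff.mp hmem).1
            rw [if_neg hcond, mul_zero, sub_zero, ← hreprW i]
            rw [Finsupp.notMem_support_iff] at hiW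
            exact hiW
        exact hmemspan Dn E hsupp
      -- x 0 - Kp n • (x n + ι Yn) ∈ span sgen
      refine ⟨x n + ι Yn, ?_⟩
      have hιW : ι Wn = ∑ m ∈ Finset.range n, Kp m • z m := by
        rw [hWn, map_sum]
        apply Finset.sum_congr rfl
        intro m _
        rw [AddMonoidHom.map_zsmul, hw]
      have hkey : x 0 - Kp n • (x n + ι Yn)
          = ι Dn - (∑ j, (∑ m ∈ Finset.range n, Kp m * s m j) • ρ j) := by
        have h1 := hTel n
        rw [← hιW] at h1
        rw [hDn, map_sub, AddMonoidHom.map_zsmul, h1, smul_add]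
        abel
      rw [hkey]
      apply sub_mem
      · have : ι Dn ∈ Submodule.map ι.toIntLinearMap (span ℤ ((⇑b) '' (E : Set ιK))) :=
          ⟨Dn, hDmem, rfl⟩
        rw [Submodule.map_span] at this
        apply span_le.mpr _ this
        intro f hf
        obtain ⟨kk, ⟨i, hiE, rfl⟩, rfl⟩ := hf
        apply subset_span
        rw [hsgen]
        simp only [Finset.coe_union, Set.mem_union, Finset.coe_image, Set.mem_image]
        right
        exact ⟨i, by exact_mod_cast hiE, rfl⟩
      · apply sum_mem
        intro j _
        apply smul_mem
        apply subset_span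
        rw [hsgen]
        simp only [Finset.coe_union, Set.mem_union, Finset.coe_image, Set.mem_image]
        left
        exact ⟨j, Finset.mem_coe.mpr (Finset.mem_univ j), rfl⟩
    -- apply divlemma
    obtain ⟨M, hM, hMx⟩ := divlemma sgen (x 0) Kp hKbig hxmem
    apply ha0 M hM
    have : π (M • x 0) ∈ Submodule.map π.toIntLinearMap (span ℤ (sgen : Set F)) :=
      ⟨M • x 0, hMx, rfl⟩
    rw [Submodule.map_span] at this
    rw [AddMonoidHom.map_zsmul, hπx] at this
    apply span_le.mpr _ this
    intro y hy
    obtain ⟨f, hf, rfl⟩ := hy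
    rw [hsgen] at hf
    simp only [Finset.coe_union, Set.mem_union, Finset.coe_image, Set.mem_image] at hf
    rcases hf with ⟨j, _, rfl⟩ | ⟨i, _, rfl⟩
    · -- π (ρ j) = τ j
      have : π.toIntLinearMap (ρ j) = τ j := hπρ j
      rw [SetLike.mem_coe, this]
      exact subset_span ⟨j, rfl⟩
    · -- π (ι (b i)) = 0
      have : π.toIntLinearMap (ι (b i)) = 0 := by
        have : ι (b i) ∈ π.ker := by
          rw [← hexact]
          exact ⟨b i, rfl⟩
        exact this
      rw [SetLike.mem_coe, this]
      exact zero_mem _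
  -- build the sequences
  have hstar' : ∀ N, ∃ p : ιK × ℕ, p.1 ∉ Finn N ∧ ¬ (Kp p.2 ∣ G p.1 p.2) := by
    intro N
    obtain ⟨i, hi, n, hn⟩ := hstar N
    exact ⟨(i, n), hi, hn⟩
  choose fp hfp1 hfp2 using hstar'
  set fI : ℕ → ιK := fun N => (fp N).1 with hfIdef
  set fN : ℕ → ℕ := fun N => (fp N).2 with hfNdef
  have hfI : ∀ N, fI N ∉ Finn N := hfp1
  have hfN : ∀ N, ¬ (Kp (fN N) ∣ G (fI N) (fN N)) := hfp2
  set nseq : ℕ → ℕ := fun l => Nat.rec 0 (fun m acc => max (fN acc) (acc + 1)) l with hnseq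
  set iseq : ℕ → ιK := fun l => fI (nseq l) with hiseq
  have hnseqs : ∀ l, nseq (l+1) = max (fN (nseq l)) (nseq l + 1) := fun l => rfl
  have hnseqlt : ∀ l, nseq l < nseq (l+1) := by
    intro l
    rw [hnseqs]
    omega
  have hnseqmono : ∀ {l m}, l ≤ m → nseq l ≤ nseq m := by
    intro l m hlm
    induction m with
    | zero => have : l = 0 := by omega
              subst this; rfl
    | succ t ih =>
      by_cases h : l = t + 1
      · subst h; rfl
      · exact le_trans (ih (by omega)) (le_of_lt (hnseqlt t))
  have hinotin : ∀ l, iseq l ∉ Finn (nseq l) := fun l => hfI (nseq l)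
  have hbad : ∀ l, ¬ (Kp (nseq (l+1)) ∣ G (iseq l) (nseq (l+1))) := by
    intro l
    exact hGmono (iseq l) (fN (nseq l)) (nseq (l+1))
      (by rw [hnseqs]; exact le_max_left _ _) (hfN (nseq l))
  have hmemFinn : ∀ l, iseq l ∈ Finn (nseq (l+1)) := by
    intro l
    by_contra hni
    exact (hbad l) (by rw [hGzero _ _ hni]; exact dvd_zero _)
  have hinjiseq : Function.Injective iseq := by
    have key : ∀ l m, l < m → iseq l = iseq m → False := by
      intro l m hlt hlm
      have h1 : iseq l ∈ Finn (nseq (l+1)) := hmemFinn l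
      have hle : l + 1 ≤ m := hlt
      have h2 : Finn (nseq (l+1)) ⊆ Finn (nseq m) := hFinnmono (hnseqmono hle)
      have h3 : iseq m ∉ Finn (nseq m) := hinotin m
      rw [← hlm] at h3
      exact h3 (h2 h1)
    intro l m hlm
    by_contra hne
    rcases Nat.lt_or_ge l m with h | h
    · exact key l m h hlm
    · exact key m l (by omega) hlm.symm
  -- the 0-1 homomorphisms
  set gfun : Set ℕ → ιK → ℤ := fun T i => if ∃ l ∈ T, iseq l = i then 1 else 0 with hgfun
  have hgapp : ∀ T i, gfun T i = if ∃ l ∈ T, iseq l = i then 1 else 0 := fun T i => rfl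
  set φfun : Set ℕ → (K →+ ℤ) := fun T => ((b.constr ℤ) (gfun T)).toAddMonoidHom with hφfun
  have hφb : ∀ T i, φfun T (b i) = gfun T i := by
    intro T i
    rw [hφfun]
    exact b.constr_basis ℤ (gfun T) i
  have hφmem : ∀ T i, φfun T (b i) ∈ ({0, 1} : Set ℤ) := by
    intro T i
    rw [hφb, hgapp]
    by_cases h : ∃ l ∈ T, iseq l = i
    · rw [if_pos h]; right; rfl
    · rw [if_neg h]; left; rfl
  have hψex : ∀ T : Set ℕ, ∃ ψ : F →+ ℤ, ψ.comp ι = φfun T := fun T => hext (φfun T) (hφmem T)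
  choose ψfun hψfun using hψex
  -- pigeonhole
  set Φ : Set ℕ → ℤ × (Fin d → ℤ) := fun T => (ψfun T (x 0), fun j => ψfun T (ρ j)) with hΦ
  have hΦnoninj : ¬ Function.Injective Φ := by
    intro hinjΦ
    haveI : Countable (Set ℕ) := hinjΦ.countable
    obtain ⟨f, hf⟩ := exists_surjective_nat (Set ℕ)
    exact Function.cantor_surjective (fun n => f n) hf
  rw [Function.not_injective_iff] at hΦnoninj
  obtain ⟨T, T', hΦeq, hTT'⟩ := hΦnoninj
  -- least difference
  have hexd : ∃ l, ¬ (l ∈ T ↔ l ∈ T') := by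
    by_contra hall
    push_neg at hall
    apply hTT'
    ext l
    exact hall l
  set lstar := Nat.find hexd with hlstar
  have hlspec : ¬ (lstar ∈ T ↔ lstar ∈ T') := Nat.find_spec hexd
  have hlmin : ∀ l, l < lstar → (l ∈ T ↔ l ∈ T') := by
    intro l hl
    have := Nat.find_min hexd hl
    by_contra hcon2
    exact this hcon2
  set nn := nseq (lstar + 1) with hnn
  -- value of g on iseq
  have hgval : ∀ (S : Set ℕ) l, gfun S (iseq l) = if l ∈ S then 1 else 0 := by
    intro S l
    rw [hgapp]
    by_cases h : l ∈ S
    · rw [if_pos h, if_pos ⟨l, h, rfl⟩]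
    · rw [if_neg h, if_neg]
      rintro ⟨l', hl', heq⟩
      exact h (by rwa [hinjiseq heq] at hl')
  -- difference computation
  have hdiffterm : ∀ i ∈ Finn nn, gfun T i - gfun T' i
      = if i = iseq lstar then (if lstar ∈ T then 1 else -1) else 0 := by
    intro i hiFinn
    by_cases hex2 : ∃ l, iseq l = i
    · obtain ⟨l, rfl⟩ := hex2
      have hlle : l ≤ lstar := by
        by_contra hgt
        push_neg at hgt
        have hgt' : lstar + 1 ≤ l := hgt
        have h0 : nseq (lstar + 1) ≤ nseq l := hnseqmono hgt'
        have h1 : Finn nn ⊆ Finn (nseq l) := hFinnmono (by rw [hnn]; exact h0)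
        exact (hinotin l) (h1 hiFinn)
      rcases Nat.lt_or_ge l lstar with hlt | hge
      · have hiff := hlmin l hlt
        rw [hgval T l, hgval T' l]
        have hne : iseq l ≠ iseq lstar := fun h => (by omega : l ≠ lstar) (hinjiseq h)
        rw [if_neg hne]
        by_cases h : l ∈ T
        · rw [if_pos h, if_pos (hiff.mp h)]; ring
        · rw [if_neg h, if_neg (fun h' => h (hiff.mpr h'))]; ring
      · have hleq : l = lstar := by omega
        rw [hleq, hgval T lstar, hgval T' lstar, if_pos rfl]
        by_cases h : lstar ∈ T
        · have h' : lstar ∉ T' := fun hmem => hlspec ⟨fun _ => hmem, fun _ => h⟩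
          rw [if_pos h, if_neg h', if_pos h]
          ring
        · have h' : lstar ∈ T' := by
            by_contra h''
            exact hlspec ⟨fun hmem => absurd hmem h, fun hmem => absurd hmem h''⟩
          rw [if_neg h, if_pos h', if_neg h]
          ring
    · have h1 : gfun T i = 0 := by
        rw [hgapp, if_neg]
        rintro ⟨l, _, heq⟩
        exact hex2 ⟨l, heq⟩
      have h2 : gfun T' i = 0 := by
        rw [hgapp, if_neg]
        rintro ⟨l, _, heq⟩
        exact hex2 ⟨l, heq⟩
      have h3 : i ≠ iseq lstar := fun h => hex2 ⟨lstar, h.symm⟩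
      rw [h1, h2, if_neg h3]
      ring
  -- divisibility from the two extensions
  have hdvdsum : Kp nn ∣ (∑ m ∈ Finset.range nn, Kp m * φfun T (w m))
      - (∑ m ∈ Finset.range nn, Kp m * φfun T' (w m)) := by
    have hc1 := hcong (φfun T) (ψfun T) (hψfun T) nn
    have hc2 := hcong (φfun T') (ψfun T') (hψfun T') nn
    have he1 : ψfun T (x 0) = ψfun T' (x 0) := congrArg Prod.fst hΦeq
    have he2 : ∀ j, ψfun T (ρ j) = ψfun T' (ρ j) := fun j => congrFun (congrArg Prod.snd hΦeq) j
    rw [hc1, hc2, he1]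
    have : (∑ j, (∑ m ∈ Finset.range nn, Kp m * s m j) * ψfun T (ρ j))
        = (∑ j, (∑ m ∈ Finset.range nn, Kp m * s m j) * ψfun T' (ρ j)) := by
      apply Finset.sum_congr rfl
      intro j _
      rw [he2 j]
    rw [this]
    have : ∀ u v c : ℤ, (u + v - Kp nn * c) - (u + v - Kp nn * c) + (Kp nn * c - Kp nn * c) = 0 := by
      intros; ring
    refine ⟨ψfun T' (x nn) - ψfun T (x nn), by ring⟩
  -- compute that difference as ± G (iseq lstar) nn
  have hsumeq : (∑ m ∈ Finset.range nn, Kp m * φfun T (w m))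
      - (∑ m ∈ Finset.range nn, Kp m * φfun T' (w m))
      = (if lstar ∈ T then 1 else -1) * G (iseq lstar) nn := by
    rw [hswap (φfun T) nn, hswap (φfun T') nn, ← Finset.sum_sub_distrib]
    have : ∀ i ∈ Finn nn, G i nn * φfun T (b i) - G i nn * φfun T' (b i)
        = if i = iseq lstar then (if lstar ∈ T then 1 else -1) * G i nn else 0 := by
      intro i hi
      rw [hφb, hφb, ← mul_sub, hdiffterm i hi]
      by_cases h : i = iseq lstar
      · rw [if_pos h, if_pos h]; ring
      · rw [if_neg h, if_neg h]; ring
    rw [Finset.sum_congr rfl this, Finset.sum_ite_eq' (Finn nn) (iseq lstar)]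
    rw [if_pos (hmemFinn lstar)]
  -- contradiction
  rw [hsumeq] at hdvdsum
  apply hbad lstar
  by_cases h : lstar ∈ T
  · rw [if_pos h, one_mul] at hdvdsum
    exact hdvdsum
  · rw [if_neg h] at hdvdsum
    have : G (iseq lstar) nn = -((-1) * G (iseq lstar) nn) := by ring
    rw [this]
    exact dvd_neg.mpr hdvdsum

end Main
end DivLemma
end

section
/- Let S be a profinite set presented as an inverse limit of finite discrete spaces S_i over a directed set Λ, let A and B be discrete abelian groups, and let φ : S → Hom(A, B) be continuous (Hom(A,B) with the topology inherited from the product B^A). Then for every finitely generated subgroup A₀ of A there exists i ∈ Λ and a map φ₀ : S_i → Hom(A₀, B) such that for all s ∈ S, the restriction of φ(s) to A₀ equals φ₀(π_i(s)). -/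
/-- The inverse limit of a system of spaces `F i` over a directed index `Λ`, with
transition maps `t h : F j → F i` for `h : i ≤ j`, realized as the subspace of the
product `Π i, F i` of compatible threads. -/
abbrev InvLim (Λ : Type) [Preorder Λ] (F : Λ → Type)
    (t : ∀ ⦃i j : Λ⦄, i ≤ j → F j → F i) : Type :=
  {u : ∀ i, F i // ∀ (i j : Λ) (h : i ≤ j), t h (u j) = u i}

/-- Let `S` be a profinite set presented as an inverse limit of finite discrete
spaces `F i` over a directed set `Λ`, let `A` and `B` be discrete abelian groups,
and let `φ : S → Hom(A, B)` be continuous, where `Hom(A, B)` carries the topology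
inherited from the product `B^A` (so continuity is that of `s ↦ (φ s : A → B)`).
Then for every finitely generated subgroup `A₀` of `A` there are `i ∈ Λ` and
`φ₀ : F i → Hom(A₀, B)` such that the restriction of `φ s` to `A₀` equals
`φ₀ (π_i s)` for all `s ∈ S`. -/
theorem stmt10 (Λ : Type) [Preorder Λ] [IsDirected Λ (· ≤ ·)] [Nonempty Λ]
    (F : Λ → Type) [∀ i, Finite (F i)]
    [∀ i, TopologicalSpace (F i)] [∀ i, DiscreteTopology (F i)]
    (t : ∀ ⦃i j : Λ⦄, i ≤ j → F j → F i)
    (ht_id : ∀ (i : Λ) (h : i ≤ i) (x : F i), t h x = x)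
    (ht_comp : ∀ ⦃i j k : Λ⦄ (hij : i ≤ j) (hjk : j ≤ k) (x : F k),
      t hij (t hjk x) = t (le_trans hij hjk) x)
    (A B : Type) [AddCommGroup A] [AddCommGroup B]
    [TopologicalSpace B] [DiscreteTopology B]
    (φ : InvLim Λ F t → (A →+ B))
    (hφ : Continuous fun s : InvLim Λ F t => (⇑(φ s) : A → B))
    (A₀ : AddSubgroup A) (hA₀ : A₀.FG) :
    ∃ (i : Λ) (φ₀ : F i → (↥A₀ →+ B)),
      ∀ s : InvLim Λ F t, (φ s).comp A₀.subtype = φ₀ (s.1 i) := by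
  classical
  obtain ⟨T, hT⟩ := hA₀
  -- (InvLim Λ F t) is compact
  have hclosed : IsClosed {u : ∀ i, F i | ∀ (i j : Λ) (h : i ≤ j), t h (u j) = u i} := by
    have heq : {u : ∀ i, F i | ∀ (i j : Λ) (h : i ≤ j), t h (u j) = u i}
        = ⋂ (i : Λ) (j : Λ) (h : i ≤ j), {u : ∀ i, F i | t h (u j) = u i} := by
      ext u; simp [Set.mem_iInter]
    rw [heq]
    refine isClosed_iInter fun i => isClosed_iInter fun j => isClosed_iInter fun h => ?_
    exact isClosed_eq ((continuous_of_discreteTopology (f := t h)).comp (continuous_apply j))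
      (continuous_apply i)
  have : CompactSpace (InvLim Λ F t) := isCompact_iff_compactSpace.mp hclosed.isCompact
  -- the finite-data map
  set g : (InvLim Λ F t) → ({a // a ∈ T} → B) := fun s a => φ s a.1 with hg
  have hgc : Continuous g := continuous_pi fun a => (continuous_apply a.1).comp hφ
  -- local constancy with finitely many coordinates
  have H : ∀ s : (InvLim Λ F t), ∃ (I : Finset Λ), ∀ s' : (InvLim Λ F t), (∀ j ∈ I, s'.1 j = s.1 j) → g s' = g s := by
    intro s
    have hop : IsOpen (g ⁻¹' {g s}) := (isOpen_discrete _).preimage hgc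
    rw [isOpen_induced_iff] at hop
    obtain ⟨U, hU, hUeq⟩ := hop
    have hsU : s.1 ∈ U := by
      have : s ∈ Subtype.val ⁻¹' U := by rw [hUeq]; exact rfl
      exact this
    rw [isOpen_pi_iff] at hU
    obtain ⟨I, u, h1, h2⟩ := hU s.1 hsU
    refine ⟨I, fun s' hs' => ?_⟩
    have hmem : s'.1 ∈ U := h2 (fun j hj => by rw [hs' j hj]; exact (h1 j hj).2)
    have : s' ∈ Subtype.val ⁻¹' U := hmem
    rw [hUeq] at this
    exact this
  choose I hI using H
  -- cover by open sets on which g is constant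
  set N : (InvLim Λ F t) → Set (InvLim Λ F t) := fun s => {s' : (InvLim Λ F t) | ∀ j ∈ I s, s'.1 j = s.1 j} with hN
  have hNopen : ∀ s, IsOpen (N s) := by
    intro s
    have : N s = ⋂ j ∈ I s, {s' : (InvLim Λ F t) | s'.1 j = s.1 j} := by
      ext s'; simp [hN, Set.mem_iInter]
    rw [this]
    refine isOpen_biInter_finset fun j _ => ?_
    exact (isOpen_discrete {s.1 j}).preimage ((continuous_apply j).comp continuous_subtype_val)
  have hNcover : (Set.univ : Set (InvLim Λ F t)) ⊆ ⋃ s, N s := fun s _ =>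
    Set.mem_iUnion.mpr ⟨s, fun j _ => rfl⟩
  obtain ⟨c, hc⟩ := isCompact_univ.elim_finite_subcover N hNopen hNcover
  obtain ⟨i, hi⟩ := (c.biUnion I).exists_le
  -- the key factorization property
  have key : ∀ s s' : (InvLim Λ F t), s.1 i = s'.1 i → g s = g s' := by
    intro s s' hss'
    obtain ⟨s₀, hs₀c, hs₀⟩ := Set.mem_iUnion₂.mp (hc (Set.mem_univ s))
    have hjle : ∀ j ∈ I s₀, j ≤ i := fun j hj =>
      hi j (Finset.mem_biUnion.mpr ⟨s₀, hs₀c, hj⟩)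
    have hs' : s' ∈ N s₀ := by
      intro j hj
      have h1 : s'.1 j = t (hjle j hj) (s'.1 i) := (s'.2 j i (hjle j hj)).symm
      have h2 : s.1 j = t (hjle j hj) (s.1 i) := (s.2 j i (hjle j hj)).symm
      rw [h1, ← hss', ← h2]
      exact hs₀ j hj
    rw [hI s₀ s hs₀, hI s₀ s' hs']
  -- restriction to A₀ is determined by g
  have hcomp : ∀ s s' : (InvLim Λ F t), g s = g s' →
      (φ s).comp A₀.subtype = (φ s').comp A₀.subtype := by
    intro s s' h
    have hle : A₀ ≤ AddMonoidHom.eqLocus (φ s) (φ s') := by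
      rw [← hT, AddSubgroup.closure_le]
      intro a ha
      exact congrFun h ⟨a, ha⟩
    ext ⟨x, hx⟩
    exact hle hx
  refine ⟨i, fun x => if h : ∃ s : (InvLim Λ F t), s.1 i = x then (φ h.choose).comp A₀.subtype else 0,
    fun s => ?_⟩
  have h : ∃ s' : (InvLim Λ F t), s'.1 i = s.1 i := ⟨s, rfl⟩
  simp only [dif_pos h]
  exact hcomp s h.choose (key s h.choose h.choose_spec.symm)
end

section
/- Let A' be a free abelian subgroup of an abelian group A with basis B', let F_{A'} be the free abelian group on generators {ā : a ∈ A'} with K_{A'} the kernel of the canonical surjection F_{A'} → A' sending ā to a, let S be a topological space, let φ : S → Hom(K_{A'}, ℤ) be continuous, and let f : S → ℤ^{B'} be continuous (ℤ discrete, product topology). Then there is a unique continuous map ψ' : S → Hom(F_{A'}, ℤ) such that for all s ∈ S and b ∈ B', ψ'(s)(b̄) = f(s)(b), and for all s ∈ S, ψ'(s) restricted to K_{A'} equals φ(s) restricted to K_{A'}. -/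
/-- Let `A'` be a free abelian subgroup of an abelian group `A` with basis `b`
indexed by `ι`, let `F_{A'} = ↥A' →₀ ℤ` be the free abelian group on the generators
`ā` (`a ∈ A'`), and let `π : F_{A'} → A'` be the canonical surjection sending each
generator `ā = Finsupp.single a 1` to `a`, with kernel `K_{A'} = ker π`.  Let `S`
be a topological space, `φ : S → Hom(K_{A'}, ℤ)` continuous and `f : S → ℤ^{B'}`
continuous (`ℤ` discrete, Hom groups with the topology of the ambient products).
Then there is a unique continuous `ψ : S → Hom(F_{A'}, ℤ)` with `ψ s (b̄ᵢ) = f s i`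
for all `s, i`, and `ψ s` restricted to `K_{A'}` equal to `φ s` for all `s`. -/
theorem stmt11 (A : Type) [AddCommGroup A] (A' : AddSubgroup A)
    (ι : Type) (b : Module.Basis ι ℤ ↥A')
    (S : Type) [TopologicalSpace S]
    (π : (↥A' →₀ ℤ) →ₗ[ℤ] ↥A')
    (hπ : ∀ a : ↥A', π (Finsupp.single a 1) = a)
    (φ : S → (↥(LinearMap.ker π) →+ ℤ))
    (hφ : Continuous fun s : S => (⇑(φ s) : ↥(LinearMap.ker π) → ℤ))
    (f : S → ι → ℤ) (hf : Continuous f) :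
    ∃! ψ : S → ((↥A' →₀ ℤ) →+ ℤ),
      (∀ (s : S) (i : ι), ψ s (Finsupp.single (b i) 1) = f s i) ∧
      (∀ (s : S) (x : ↥A' →₀ ℤ) (hx : x ∈ LinearMap.ker π),
        ψ s x = φ s ⟨x, hx⟩) ∧
      Continuous fun s : S => (⇑(ψ s) : (↥A' →₀ ℤ) → ℤ) := by
  classical
  -- section of π
  set σ : ↥A' →ₗ[ℤ] (↥A' →₀ ℤ) := b.constr ℤ (fun i => Finsupp.single (b i) 1) with hσdef
  have hσb : ∀ i, σ (b i) = Finsupp.single (b i) 1 := fun i => b.constr_basis ℤ _ i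
  have hπσ : ∀ a : ↥A', π (σ a) = a := by
    have : π ∘ₗ σ = LinearMap.id := by
      apply b.ext
      intro i
      simp [hσb, hπ]
    intro a
    exact congrArg (fun g => g a) (congrArg DFunLike.coe this)
  have hker : ∀ x : ↥A' →₀ ℤ, x - σ (π x) ∈ LinearMap.ker π := by
    intro x; simp [LinearMap.mem_ker, hπσ]
  have hσa : ∀ a : ↥A', σ a = (b.repr a).sum fun i c => c • Finsupp.single (b i) 1 := by
    intro a
    conv_lhs => rw [← b.linearCombination_repr a, Finsupp.linearCombination_apply]
    rw [map_finsuppSum]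
    exact Finsupp.sum_congr fun i _ => by rw [map_zsmul, hσb]
  -- candidate
  set ψ₀ : S → ((↥A' →₀ ℤ) →+ ℤ) := fun s =>
    { toFun := fun x => φ s ⟨x - σ (π x), hker x⟩ + (b.repr (π x)).sum fun i c => c * f s i
      map_zero' := by
        have h0 : (⟨(0:↥A' →₀ ℤ) - σ (π 0), hker 0⟩ : ↥(LinearMap.ker π)) = 0 := by
          ext; simp
        rw [h0, map_zero]
        simp
      map_add' := by
        intro x y
        have h1 : (⟨x + y - σ (π (x+y)), hker _⟩ : ↥(LinearMap.ker π))
            = ⟨x - σ (π x), hker x⟩ + ⟨y - σ (π y), hker y⟩ := by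
          ext; simp; abel
        rw [h1, map_add]
        have h2 : (b.repr (π (x+y))).sum (fun i c => c * f s i)
            = (b.repr (π x)).sum (fun i c => c * f s i)
              + (b.repr (π y)).sum (fun i c => c * f s i) := by
          rw [map_add, map_add, Finsupp.sum_add_index]
          · intro i _; ring
          · intro i _ c d; ring
        rw [h2]; ring } with hψ₀def
  -- the key computation: any ψ' satisfying the two algebraic conditions agrees with ψ₀
  have key : ∀ (g : (↥A' →₀ ℤ) →+ ℤ) (s : S),
      (∀ i : ι, g (Finsupp.single (b i) 1) = f s i) →
      (∀ (x : ↥A' →₀ ℤ) (hx : x ∈ LinearMap.ker π), g x = φ s ⟨x, hx⟩) →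
      g = ψ₀ s := by
    intro g s h1 h2
    apply Finsupp.addHom_ext
    intro a n
    have hgen : ∀ (g' : (↥A' →₀ ℤ) →+ ℤ),
        (∀ i : ι, g' (Finsupp.single (b i) 1) = f s i) →
        (∀ (x : ↥A' →₀ ℤ) (hx : x ∈ LinearMap.ker π), g' x = φ s ⟨x, hx⟩) →
        g' (Finsupp.single a n) = n * (φ s ⟨Finsupp.single a 1 - σ a, by
            simpa [LinearMap.mem_ker, hπ] using hker (Finsupp.single a 1)⟩
          + (b.repr a).sum fun i c => c * f s i) := by
      intro g' h1' h2'
      have hs : Finsupp.single a n = n • Finsupp.single a (1:ℤ) := by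
        rw [Finsupp.smul_single]; norm_num
      rw [hs, map_zsmul]
      have split : Finsupp.single a (1:ℤ)
          = (Finsupp.single a 1 - σ a) + σ a := by abel
      have : g' (Finsupp.single a (1:ℤ))
          = g' (Finsupp.single a 1 - σ a) + g' (σ a) := by
        conv_lhs => rw [split]
        rw [map_add]
      rw [this, h2' _ (by simpa [LinearMap.mem_ker, hπ] using hker (Finsupp.single a 1))]
      have hσg : g' (σ a) = (b.repr a).sum fun i c => c * f s i := by
        rw [hσa, map_finsuppSum]
        apply Finsupp.sum_congr
        intro i _
        rw [map_zsmul, h1' i, smul_eq_mul]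
      rw [hσg, smul_eq_mul]
    have e1 := hgen g h1 h2
    have e2 := hgen (ψ₀ s) (fun i => by
        show φ s _ + _ = _
        have hx0 : (⟨Finsupp.single (b i) 1 - σ (π (Finsupp.single (b i) 1)), hker _⟩ :
            ↥(LinearMap.ker π)) = 0 := by
          ext; simp [hπ, hσb]
        rw [hx0, map_zero]
        simp [hπ])
      (fun x hx => by
        show φ s _ + _ = _
        have hx0 : π x = 0 := hx
        have : (⟨x - σ (π x), hker x⟩ : ↥(LinearMap.ker π)) = ⟨x, hx⟩ := by
          ext; simp [hx0]
        rw [this, hx0]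
        simp)
    rw [e1, e2]
  refine ⟨ψ₀, ⟨?_, ?_, ?_⟩, ?_⟩
  · intro s i
    show φ s _ + _ = _
    have hx0 : (⟨Finsupp.single (b i) 1 - σ (π (Finsupp.single (b i) 1)), hker _⟩ :
        ↥(LinearMap.ker π)) = 0 := by
      ext; simp [hπ, hσb]
    rw [hx0, map_zero]
    simp [hπ]
  · intro s x hx
    show φ s _ + _ = _
    have hx0 : π x = 0 := hx
    have : (⟨x - σ (π x), hker x⟩ : ↥(LinearMap.ker π)) = ⟨x, hx⟩ := by
      ext; simp [hx0]
    rw [this, hx0]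
    simp
  · apply continuous_pi
    intro x
    show Continuous fun s => φ s ⟨x - σ (π x), hker x⟩ + (b.repr (π x)).sum fun i c => c * f s i
    apply Continuous.add
    · exact (continuous_apply _).comp hφ
    · simp only [Finsupp.sum]
      apply continuous_finset_sum
      intro i _
      exact continuous_const.mul ((continuous_apply i).comp hf)
  · intro ψ' ⟨h1, h2, _⟩
    funext s
    exact key (ψ' s) s (h1 s) (h2 s)
end

section
/- Let X be a compact Hausdorff space with τ_c its collection of closed subsets, let B be a complete Boolean algebra with Stone space S, and suppose ⟨b_D : D ∈ τ_c⟩ are elements of B such that for all closed D₀, D₁: b_{D₀∩D₁} = b_{D₀} ∧ b_{D₁}, and whenever D₀ ∪ D₁ = X then b_{D₀} ∨ b_{D₁} = 1, and b_∅ = 0. Then for every ultrafilter U on B, the intersection ⋂{D ∈ τ_c : b_D ∈ U} contains exactly one point, and the resulting map f : S → X is continuous. -/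
/-- The Stone space of a Boolean algebra `B`: its points are the ultrafilters on `B`,
encoded as bounded lattice homomorphisms `B → Bool`, with the topology generated by
the basic clopen sets `N_b = {U : U b = true}`. -/
instance stoneTopology (B : Type) [BooleanAlgebra B] :
    TopologicalSpace (BoundedLatticeHom B Bool) :=
  TopologicalSpace.generateFrom
    {s | ∃ b : B, s = {U : BoundedLatticeHom B Bool | U b = true}}

/-- Let `X` be a compact Hausdorff space, `B` a complete Boolean algebra with Stone
space `S`, and `bD : D ↦ ⟦D ∈ Ḟ⟧` an assignment of elements of `B` to (closed)
subsets of `X` such that `bD (D₀ ∩ D₁) = bD D₀ ⊓ bD D₁` for closed `D₀, D₁`,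
`bD D₀ ⊔ bD D₁ = ⊤` whenever `D₀ ∪ D₁ = X` are closed, and `bD ∅ = ⊥`.  Then for
every ultrafilter `U` on `B` the intersection `⋂ {D closed : bD D ∈ U}` contains
exactly one point, and the resulting map `f : S → X` is continuous. -/
theorem stmt13 (B : Type) [CompleteBooleanAlgebra B]
    (X : Type) [TopologicalSpace X] [CompactSpace X] [T2Space X]
    (bD : Set X → B)
    (hmeet : ∀ D₀ D₁ : Set X, IsClosed D₀ → IsClosed D₁ →
      bD (D₀ ∩ D₁) = bD D₀ ⊓ bD D₁)
    (hcov : ∀ D₀ D₁ : Set X, IsClosed D₀ → IsClosed D₁ → D₀ ∪ D₁ = Set.univ →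
      bD D₀ ⊔ bD D₁ = ⊤)
    (hempty : bD ∅ = ⊥) :
    (∀ U : BoundedLatticeHom B Bool,
      ∃! x : X, ∀ D : Set X, IsClosed D → U (bD D) = true → x ∈ D) ∧
    ∃ f : BoundedLatticeHom B Bool → X, Continuous f ∧
      ∀ (U : BoundedLatticeHom B Bool) (D : Set X),
        IsClosed D → U (bD D) = true → f U ∈ D := by
  have htop : bD Set.univ = ⊤ := by
    have := hcov Set.univ Set.univ isClosed_univ isClosed_univ (by simp)
    simpa using this
  -- existence and uniqueness
  have huniq : ∀ U : BoundedLatticeHom B Bool,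
      ∃! x : X, ∀ D : Set X, IsClosed D → U (bD D) = true → x ∈ D := by
    intro U
    classical
    set ι := {D : Set X // IsClosed D ∧ U (bD D) = true} with hι
    have hne : (⋂ i : ι, (i : Set X)).Nonempty := by
      by_contra hcon
      rw [Set.not_nonempty_iff_eq_empty] at hcon
      have h0 : Set.univ ∩ ⋂ i : ι, (i : Set X) = ∅ := by simp [hcon]
      obtain ⟨u, hu⟩ := isCompact_univ.elim_finite_subfamily_closed
        (fun i : ι => (i : Set X)) (fun i => i.2.1) h0
      have key : ∀ u : Finset ι,
          IsClosed (⋂ i ∈ u, (i : Set X)) ∧ U (bD (⋂ i ∈ u, (i : Set X))) = true := by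
        intro u
        induction u using Finset.induction_on with
        | empty => refine ⟨?_, ?_⟩ <;> simp [htop]
        | @insert a u ha ih =>
          rw [Finset.set_biInter_insert]
          refine ⟨a.2.1.inter ih.1, ?_⟩
          rw [hmeet _ _ a.2.1 ih.1, map_inf]
          simp [a.2.2, ih.2]
      have h2 := (key u).2
      rw [Set.univ_inter] at hu
      rw [hu, hempty, map_bot] at h2
      exact absurd h2 (by simp)
    obtain ⟨x, hx⟩ := hne
    refine ⟨x, ?_, ?_⟩
    · intro D hD hUD
      exact Set.mem_iInter.mp hx ⟨D, hD, hUD⟩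
    · intro y hy
      by_contra hne'
      obtain ⟨V, W, hV, hW, hyV, hxW, hVW⟩ := t2_separation hne'
      have hunion : Vᶜ ∪ Wᶜ = Set.univ := by
        rw [← Set.compl_inter, hVW.inter_eq, Set.compl_empty]
      have := hcov _ _ hV.isClosed_compl hW.isClosed_compl hunion
      have hsup : U (bD Vᶜ) ⊔ U (bD Wᶜ) = ⊤ := by
        rw [← map_sup, this, map_top]
      rcases Bool.or_eq_true_iff.mp hsup with h | h
      · exact (hy Vᶜ hV.isClosed_compl h) hyV
      · exact (Set.mem_iInter.mp hx ⟨Wᶜ, hW.isClosed_compl, h⟩) hxW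
  refine ⟨huniq, ?_⟩
  choose f hf _ using huniq
  refine ⟨f, ?_, fun U D hD h => hf U D hD h⟩
  rw [continuous_def]
  intro V hV
  rw [isOpen_iff_forall_mem_open]
  intro U hU
  -- f U ∈ V, find closed D₁ ⊆ V which is a neighborhood of f U
  obtain ⟨s, hs, hscl, hsV⟩ := exists_mem_nhds_isClosed_subset (hV.mem_nhds hU)
  have hfU : f U ∈ interior s := mem_interior_iff_mem_nhds.mpr hs
  have hD1 : U (bD s) = true := by
    have hunion : (interior s)ᶜ ∪ s = Set.univ := by
      apply Set.eq_univ_of_forall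
      intro z
      by_cases hz : z ∈ interior s
      · exact Or.inr (interior_subset hz)
      · exact Or.inl hz
    have := hcov _ _ isOpen_interior.isClosed_compl hscl hunion
    have hsup : U (bD (interior s)ᶜ) ⊔ U (bD s) = ⊤ := by
      rw [← map_sup, this, map_top]
    rcases Bool.or_eq_true_iff.mp hsup with h | h
    · exact absurd hfU (hf U _ isOpen_interior.isClosed_compl h)
    · exact h
  refine ⟨{U' : BoundedLatticeHom B Bool | U' (bD s) = true}, ?_, ?_, hD1⟩
  · intro U' hU'
    exact hsV (hf U' s hscl hU')
  · exact TopologicalSpace.isOpen_generateFrom_of_mem ⟨bD s, rfl⟩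
end

section
/- If A is a nonfree abelian group of cardinality κ, then Ext^1(A, ℤ^{(κ)}) ≠ 0, where ℤ^{(κ)} denotes the free abelian group on κ generators (direct sum of κ copies of ℤ). -/
open CategoryTheory Opposite

set_option linter.unusedSectionVars false
set_option maxHeartbeats 1000000

section Aux
open Limits

section FreeSubmoduleInt
open Finsupp

section FreeSub
variable {ι : Type} [LinearOrder ι] [WellFoundedLT ι] (N : Submodule ℤ (ι →₀ ℤ))

namespace FreeSub

noncomputable def I (i : ι) : Ideal ℤ :=
  Submodule.map (Finsupp.lapply i) (N ⊓ Finsupp.supported ℤ ℤ (Set.Iic i))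

noncomputable def a (i : ι) : ℤ := Submodule.IsPrincipal.generator (I N i)

lemma a_mem (i : ι) : a N i ∈ I N i := Submodule.IsPrincipal.generator_mem _

lemma a_ne_zero {i : ι} (h : I N i ≠ ⊥) : a N i ≠ 0 := by
  intro h0
  apply h
  rw [← Submodule.IsPrincipal.span_singleton_generator (I N i)]
  show Submodule.span ℤ {a N i} = ⊥
  rw [h0, Submodule.span_singleton_eq_bot]

noncomputable def y (i : ι) : ι →₀ ℤ := (Submodule.mem_map.mp (a_mem N i)).choose

lemma y_spec (i : ι) :
    y N i ∈ N ∧ (↑(y N i).support ⊆ Set.Iic i) ∧ y N i i = a N i := by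
  obtain ⟨h1, h2⟩ := (Submodule.mem_map.mp (a_mem N i)).choose_spec
  exact ⟨h1.1, h1.2, h2⟩

lemma y_apply_of_lt {i j : ι} (h : i < j) : y N i j = 0 := by
  by_contra h0
  exact absurd ((y_spec N i).2.1 (Finsupp.mem_support_iff.mpr h0)) (not_le.mpr h)

noncomputable def v : {i : ι | I N i ≠ ⊥} → ↥N := fun s => ⟨y N s, (y_spec N s).1⟩

lemma linInd : LinearIndependent ℤ (fun s : {i : ι | I N i ≠ ⊥} => y N (s : ι)) := by
  classical
  rw [linearIndependent_iff']
  intro s g hsum j hj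
  by_contra hgj
  set T := s.filter (fun t => g t ≠ 0) with hT
  have hjT : j ∈ T := Finset.mem_filter.mpr ⟨hj, hgj⟩
  have hTne : T.Nonempty := ⟨j, hjT⟩
  set m := T.max' hTne with hm
  have hmT : m ∈ T := T.max'_mem hTne
  have hms : m ∈ s := (Finset.mem_filter.mp hmT).1
  have hgm : g m ≠ 0 := (Finset.mem_filter.mp hmT).2
  have h0 : (∑ t ∈ s, g t • y N (t : ι)) (m : ι) = 0 := by rw [hsum]; rfl
  rw [Finsupp.finset_sum_apply] at h0
  rw [Finset.sum_eq_single m] at h0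
  · rw [Finsupp.smul_apply, smul_eq_mul] at h0
    rw [(y_spec N m).2.2] at h0
    exact absurd h0 (mul_ne_zero hgm (a_ne_zero N m.2))
  · intro t ht htm
    rw [Finsupp.smul_apply, smul_eq_mul]
    by_cases hgt : g t = 0
    · rw [hgt, zero_mul]
    · have htT : t ∈ T := Finset.mem_filter.mpr ⟨ht, hgt⟩
      have : t < m := lt_of_le_of_ne (T.le_max' t htT) htm
      rw [y_apply_of_lt N (Subtype.coe_lt_coe.mpr this), mul_zero]
  · intro h; exact absurd hms h

lemma span_aux : ∀ (i : ι) (x : ι →₀ ℤ), x ∈ N → (↑x.support ⊆ Set.Iic i) →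
    x ∈ Submodule.span ℤ (Set.range fun s : {i : ι | I N i ≠ ⊥} => y N (s : ι)) := by
  intro i
  induction i using WellFoundedLT.induction with
  | _ i IH =>
    intro x hxN hsupp
    have hzero : ∀ z : ι →₀ ℤ, z ∈ N → (↑z.support ⊆ Set.Iic i) → z i = 0 →
        z ∈ Submodule.span ℤ (Set.range fun s : {i : ι | I N i ≠ ⊥} => y N (s : ι)) := by
      intro z hzN hzsupp hzi
      rcases eq_or_ne z 0 with rfl | hz0
      · exact Submodule.zero_mem _
      · have hne : z.support.Nonempty := Finsupp.support_nonempty_iff.mpr hz0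
        set j := z.support.max' hne with hj
        have hjmem : j ∈ z.support := z.support.max'_mem hne
        have hji : j < i := lt_of_le_of_ne (hzsupp hjmem)
          (fun h => (Finsupp.mem_support_iff.mp hjmem) (h ▸ hzi))
        exact IH j hji z hzN (fun k hk => z.support.le_max' k hk)
    by_cases hxi : x i = 0
    · exact hzero x hxN hsupp hxi
    · have hxmem : x ∈ N ⊓ Finsupp.supported ℤ ℤ (Set.Iic i) := ⟨hxN, hsupp⟩
      have hxI : x i ∈ I N i := ⟨x, hxmem, rfl⟩
      have hIne : I N i ≠ ⊥ := by
        intro h; rw [h] at hxI; exact hxi (by simpa using hxI)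
      obtain ⟨c, hc⟩ := Submodule.mem_span_singleton.mp
        (by rw [Submodule.IsPrincipal.span_singleton_generator (I N i)]; exact hxI)
      have hyN := (y_spec N i).1
      set x' := x - c • y N i with hx'
      have hx'N : x' ∈ N := N.sub_mem hxN (N.smul_mem c hyN)
      have hx'supp : ↑x'.support ⊆ Set.Iic i := by
        intro k hk
        have := Finsupp.support_sub (f := x) (g := c • y N i) hk
        rcases Finset.mem_union.mp this with h | h
        · exact hsupp h
        · have := Finsupp.support_smul h
          exact (y_spec N i).2.1 this
      have hx'i : x' i = 0 := by
        rw [hx']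
        simp only [Finsupp.sub_apply, Finsupp.smul_apply, smul_eq_mul]
        rw [(y_spec N i).2.2]
        have : c • a N i = x i := hc
        rw [smul_eq_mul] at this
        omega
      have hx'span := hzero x' hx'N hx'supp hx'i
      have hyspan : y N i ∈ Submodule.span ℤ
          (Set.range fun s : {i : ι | I N i ≠ ⊥} => y N (s : ι)) :=
        Submodule.subset_span ⟨⟨i, hIne⟩, rfl⟩
      have : x = x' + c • y N i := by rw [hx']; abel
      rw [this]
      exact Submodule.add_mem _ hx'span (Submodule.smul_mem _ c hyspan)

lemma span_top : ⊤ ≤ Submodule.span ℤ (Set.range (v N)) := by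
  rintro ⟨x, hx⟩ -
  have key : x ∈ Submodule.span ℤ (Set.range fun s : {i : ι | I N i ≠ ⊥} => y N (s : ι)) := by
    rcases eq_or_ne x 0 with rfl | hx0
    · exact Submodule.zero_mem _
    · have hne : x.support.Nonempty := Finsupp.support_nonempty_iff.mpr hx0
      exact span_aux N (x.support.max' hne) x hx (fun k hk => x.support.le_max' k hk)
  have himg : (Set.range fun s : {i : ι | I N i ≠ ⊥} => y N (s : ι))
      = N.subtype '' (Set.range (v N)) := by
    ext z
    constructor
    · rintro ⟨s, rfl⟩; exact ⟨v N s, ⟨s, rfl⟩, rfl⟩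
    · rintro ⟨w, ⟨s, rfl⟩, rfl⟩; exact ⟨s, rfl⟩
  rw [himg, ← Submodule.map_span] at key
  obtain ⟨w, hw, hwx⟩ := Submodule.mem_map.mp key
  have : w = ⟨x, hx⟩ := Subtype.ext hwx
  rwa [← this]

noncomputable def basisOfSubmodule : Module.Basis {i : ι | I N i ≠ ⊥} ℤ ↥N :=
  Module.Basis.mk (LinearIndependent.of_comp N.subtype (by exact linInd N)) (span_top N)

end FreeSub

theorem Submodule.exists_basis_finsupp_int (ι : Type) (N : Submodule ℤ (ι →₀ ℤ)) :
    ∃ S : Set ι, Nonempty (Module.Basis S ℤ ↥N) := by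
  letI : DecidableRel (@WellOrderingRel ι) := Classical.decRel _
  letI : LinearOrder ι := linearOrderOfSTO WellOrderingRel
  haveI : WellFoundedLT ι := ⟨show WellFounded (@WellOrderingRel ι) from IsWellFounded.wf⟩
  exact ⟨_, ⟨FreeSub.basisOfSubmodule N⟩⟩

end FreeSub

end FreeSubmoduleInt


section Main

variable {A : Type} [AddCommGroup A] {ι : Type}

noncomputable abbrev Fmod (ι : Type) : ModuleCat ℤ := ModuleCat.of ℤ (ι →₀ ℤ)

variable (f : (ι →₀ ℤ) →ₗ[ℤ] A)

noncomputable abbrev Kmod : ModuleCat ℤ := ModuleCat.of ℤ ↥(LinearMap.ker f)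

noncomputable def resX : ℕ → ModuleCat ℤ
  | 0 => Fmod ι
  | 1 => Kmod f
  | _ + 2 => ModuleCat.of ℤ PUnit

noncomputable def resD : ∀ n, resX f (n + 1) ⟶ resX f n
  | 0 => ModuleCat.ofHom (LinearMap.ker f).subtype
  | _ + 1 => 0

noncomputable def resC : ChainComplex (ModuleCat ℤ) ℕ :=
  ChainComplex.of (resX f) (resD f) (fun _ => zero_comp)

lemma resC_d10 : (resC f).d 1 0 = ModuleCat.ofHom (LinearMap.ker f).subtype :=
  ChainComplex.of_d (resX f) (resD f) 0

lemma resC_d21 : (resC f).d 2 1 = 0 :=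
  ChainComplex.of_d (resX f) (resD f) 1

lemma projective_resX (n : ℕ) : Projective ((resC f).X n) := by
  match n with
  | 0 => exact ModuleCat.projective_of_free (Finsupp.basisSingleOne (R := ℤ) (ι := ι))
  | 1 =>
    obtain ⟨S, ⟨b⟩⟩ := Submodule.exists_basis_finsupp_int ι (LinearMap.ker f)
    exact ModuleCat.projective_of_free b
  | (n + 2) =>
    haveI : Subsingleton ↑((resC f).X (n + 2)) := show Subsingleton PUnit from inferInstance
    exact (ModuleCat.isZero_of_subsingleton _).projective

lemma d10_comp_f : (resC f).d 1 0 ≫ ModuleCat.ofHom f = 0 := by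
  rw [resC_d10]
  ext x
  exact x.2

noncomputable def resπ : resC f ⟶ (ChainComplex.single₀ (ModuleCat ℤ)).obj (ModuleCat.of ℤ A) :=
  (ChainComplex.toSingle₀Equiv _ _).symm ⟨ModuleCat.ofHom f, d10_comp_f f⟩

lemma resπ_f0 : (resπ f).f 0 = ModuleCat.ofHom f :=
  ChainComplex.toSingle₀Equiv_symm_apply_f_zero _ _

lemma resQuasi (hf : Function.Surjective f) : QuasiIso (resπ f) := by
  rw [quasiIso_iff]
  rintro (_ | n)
  · rw [ChainComplex.quasiIsoAt₀_iff]
    set φ := (HomologicalComplex.shortComplexFunctor' (ModuleCat ℤ) _ 1 0 0).map (resπ f) with hφ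
    have hg₁ : ((resC f).sc' 1 0 0).g = 0 := (resC f).shape 0 0 (by simp)
    have hf₂ : (((ChainComplex.single₀ (ModuleCat ℤ)).obj (ModuleCat.of ℤ A)).sc' 1 0 0).f = 0 :=
      (HomologicalComplex.isZero_single_obj_X (ComplexShape.down ℕ) 0 (ModuleCat.of ℤ A) 1
        one_ne_zero).eq_of_src _ _
    have hg₂ : (((ChainComplex.single₀ (ModuleCat ℤ)).obj (ModuleCat.of ℤ A)).sc' 1 0 0).g = 0 :=
      ((ChainComplex.single₀ (ModuleCat ℤ)).obj (ModuleCat.of ℤ A)).shape 0 0 (by simp)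
    have hτ : φ.τ₂ = ModuleCat.ofHom f := resπ_f0 f
    refine (ShortComplex.quasiIso_iff_of_zeros' φ hg₁ hf₂ hg₂).mpr ⟨?_, ?_⟩
    · rw [ShortComplex.moduleCat_exact_iff]
      intro x hx
      have hx2 : φ.τ₂ x = 0 := hx
      have hx' : f x = 0 := by rw [hτ] at hx2; exact hx2
      refine ⟨⟨x, hx'⟩, ?_⟩
      show ((resC f).d 1 0) ⟨x, hx'⟩ = x
      rw [resC_d10]
      rfl
    · rw [ModuleCat.epi_iff_surjective, hτ]
      exact hf
  · rw [quasiIsoAt_iff_exactAt' _ _ (ChainComplex.exactAt_succ_single_obj _ n)]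
    rw [HomologicalComplex.exactAt_iff' _ (n + 2) (n + 1) n (by simp) (by simp)]
    match n with
    | 0 =>
      rw [ShortComplex.moduleCat_exact_iff]
      intro x hx
      have hx0 : x = 0 := by
        have : ((resC f).d 1 0) x = 0 := hx
        rw [resC_d10] at this
        exact Subtype.ext this
      refine ⟨0, ?_⟩
      show ((resC f).d 2 1) 0 = x
      rw [hx0, map_zero]; rfl
    | (n + 1) =>
      apply ShortComplex.exact_of_isZero_X₂
      show IsZero ((resC f).X (n + 1 + 1))
      haveI : Subsingleton ↑((resC f).X (n + 1 + 1)) := show Subsingleton PUnit from inferInstance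
      exact ModuleCat.isZero_of_subsingleton _

noncomputable def resP (hf : Function.Surjective f) :
    ProjectiveResolution (ModuleCat.of ℤ A) where
  complex := resC f
  projective := projective_resX f
  π := resπ f
  quasiIso := resQuasi f hf

end Main

end Aux
open Limits

/-- The first Ext group `Ext¹(A, B)` computed in the category of abelian groups
(ℤ-modules). -/
noncomputable abbrev Ext1 (A B : Type) [AddCommGroup A] [AddCommGroup B] : Type :=
  ↥(((Ext ℤ (ModuleCat ℤ) 1).obj (op (ModuleCat.of ℤ A))).obj (ModuleCat.of ℤ B))

/-- If `A` is a nonfree abelian group of cardinality `κ`, then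
`Ext¹(A, ℤ^{(κ)}) ≠ 0`, where `ℤ^{(κ)}` is the free abelian group on `κ`
generators, here realized as `ι →₀ ℤ` for an index type `ι` of cardinality `κ`. -/
theorem stmt15 (A : Type) [AddCommGroup A] (hA : ¬ Module.Free ℤ A)
    (ι : Type) (hcard : Cardinal.mk ι = Cardinal.mk A) :
    ¬ Subsingleton (Ext1 A (ι →₀ ℤ)) := by
  intro hsub
  apply hA
  classical
  obtain ⟨e⟩ := Cardinal.eq.mp hcard
  set f : (ι →₀ ℤ) →ₗ[ℤ] A := Finsupp.linearCombination ℤ (fun i => e i) with hfdef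
  have hf : Function.Surjective f := by
    intro a
    refine ⟨Finsupp.single (e.symm a) 1, ?_⟩
    simp [hfdef]
  -- basis of the kernel
  obtain ⟨S, ⟨b⟩⟩ := Submodule.exists_basis_finsupp_int ι (LinearMap.ker f)
  -- split embedding of the kernel into ι →₀ ℤ
  set esp : ↥(LinearMap.ker f) →ₗ[ℤ] (ι →₀ ℤ) :=
    (Finsupp.lmapDomain ℤ ℤ (Subtype.val : S → ι)) ∘ₗ (b.repr : _ →ₗ[ℤ] _) with hesp
  set rsp : (ι →₀ ℤ) →ₗ[ℤ] ↥(LinearMap.ker f) :=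
    (b.repr.symm : _ →ₗ[ℤ] _) ∘ₗ
      Finsupp.lcomapDomain (Subtype.val : S → ι) Subtype.val_injective with hrsp
  have hretr : ∀ x : ↥(LinearMap.ker f), rsp (esp x) = x := by
    intro x
    have hcm : ∀ l : S →₀ ℤ,
        Finsupp.comapDomain (Subtype.val : S → ι)
          (Finsupp.mapDomain (Subtype.val : S → ι) l) (Subtype.val_injective.injOn) = l := by
      intro l
      ext s
      rw [Finsupp.comapDomain_apply, Finsupp.mapDomain_apply Subtype.val_injective]
    show b.repr.symm (Finsupp.lcomapDomain (M := ℤ) (R := ℤ) (Subtype.val : S → ι)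
        Subtype.val_injective
      (Finsupp.lmapDomain ℤ ℤ (Subtype.val : S → ι) (b.repr x))) = x
    have : Finsupp.lcomapDomain (M := ℤ) (R := ℤ) (Subtype.val : S → ι) Subtype.val_injective
        (Finsupp.lmapDomain ℤ ℤ (Subtype.val : S → ι) (b.repr x)) = b.repr x := hcm _
    rw [this, LinearEquiv.symm_apply_apply]
  -- use the projective resolution to compute Ext¹ and extract a splitting
  set Y : ModuleCat ℤ := Fmod ι with hY
  set L := ((resC f).linearYonedaObj ℤ Y) with hL
  have E := ProjectiveResolution.isoExt (R := ℤ) (resP f hf) 1 Y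
  haveI hs2 : Subsingleton ↑(L.homology 1) := by
    constructor
    intro x y
    exact (ModuleCat.mono_iff_injective E.inv).mp inferInstance
      (@Subsingleton.elim _ hsub _ _)
  have hzero : IsZero (L.homology 1) := ModuleCat.isZero_of_subsingleton _
  have hex : L.ExactAt 1 := (HomologicalComplex.exactAt_iff_isZero_homology _ _).mpr hzero
  rw [HomologicalComplex.exactAt_iff' _ 0 1 2 (by simp) (by simp)] at hex
  rw [ShortComplex.moduleCat_exact_iff] at hex
  -- apply exactness to the split embedding
  haveI hsub2 : Subsingleton ((resC f).X 2 ⟶ Y) := by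
    constructor
    intro a c
    haveI : Subsingleton ↑((resC f).X 2) := show Subsingleton PUnit from inferInstance
    ext x
    rw [Subsingleton.elim x (0 : ↑((resC f).X 2)), map_zero, map_zero]
  haveI hsub3 : Subsingleton ↑(L.X 2) := hsub2
  obtain ⟨g, hg⟩ := hex (ModuleCat.ofHom esp) (@Subsingleton.elim _ hsub3 _ _)
  set gh : (resC f).X 0 ⟶ Y := g with hgh
  have hg' : (resC f).d 1 0 ≫ gh = ModuleCat.ofHom esp := by
    have h1 : L.d 0 1 gh = ModuleCat.ofHom esp := hg
    have h2 : L.d 0 1 = ModuleCat.ofHom (Linear.leftComp ℤ Y ((resC f).d 1 0)) :=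
      ChainComplex.linearYonedaObj_d _ _ _ _ _
    rw [h2] at h1
    exact h1
  rw [resC_d10] at hg'
  have hgk : ∀ k : ↥(LinearMap.ker f), gh ((k : ι →₀ ℤ)) = esp k := by
    intro k
    exact LinearMap.congr_fun (congrArg ModuleCat.Hom.hom hg') k
  set ρ : (ι →₀ ℤ) →ₗ[ℤ] ↥(LinearMap.ker f) :=
    rsp ∘ₗ (show (ι →₀ ℤ) →ₗ[ℤ] (ι →₀ ℤ) from gh.hom) with hρdef
  have hρ : ∀ k : ↥(LinearMap.ker f), ρ ↑k = k := fun k => by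
    show rsp (gh ((k : ι →₀ ℤ))) = k
    rw [hgk k]; exact hretr k
  set p : (ι →₀ ℤ) →ₗ[ℤ] (ι →₀ ℤ) :=
    LinearMap.id - (LinearMap.ker f).subtype ∘ₗ ρ with hp
  have hKp : LinearMap.ker f ≤ LinearMap.ker p := by
    intro x hx
    rw [LinearMap.mem_ker]
    show x - ((ρ x : ↥(LinearMap.ker f)) : ι →₀ ℤ) = 0
    rw [show ρ x = ρ ↑(⟨x, hx⟩ : ↥(LinearMap.ker f)) from rfl, hρ ⟨x, hx⟩]
    simp
  have hfp : ∀ x, f (p x) = f x := by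
    intro x
    show f (x - ↑(ρ x)) = f x
    rw [map_sub]
    have h0 : f ↑(ρ x) = 0 := (ρ x).2
    rw [h0, sub_zero]
  set q := (LinearMap.ker f).liftQ p hKp with hq
  have hbij : Function.Bijective ((LinearMap.ker f).liftQ f le_rfl) := by
    constructor
    · rw [← LinearMap.ker_eq_bot]
      exact Submodule.ker_liftQ_eq_bot _ _ _ le_rfl
    · intro a
      obtain ⟨x, hx⟩ := hf a
      exact ⟨Submodule.Quotient.mk x, by rwa [Submodule.liftQ_apply]⟩
  set myE := LinearEquiv.ofBijective _ hbij with hmyE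
  set σ : A →ₗ[ℤ] (ι →₀ ℤ) := q ∘ₗ (myE.symm : _ →ₗ[ℤ] _) with hσ
  have hfσ : ∀ a, f (σ a) = a := by
    intro a
    obtain ⟨x, hx⟩ := Submodule.Quotient.mk_surjective _ (myE.symm a)
    have h1 : σ a = p x := by
      show q (myE.symm a) = p x
      rw [← hx, hq, Submodule.liftQ_apply]
    rw [h1, hfp]
    have h3 : myE (myE.symm a) = a := myE.apply_symm_apply a
    rw [← hx, hmyE, LinearEquiv.ofBijective_apply, Submodule.liftQ_apply] at h3
    exact h3
  have hσinj : Function.Injective σ := by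
    intro a b hab
    have h := congrArg f hab
    rwa [hfσ, hfσ] at h
  obtain ⟨S', ⟨b'⟩⟩ := Submodule.exists_basis_finsupp_int ι (LinearMap.range σ)
  haveI : Module.Free ℤ ↥(LinearMap.range σ) := Module.Free.of_basis b'
  exact Module.Free.of_equiv (LinearEquiv.ofInjective σ hσinj).symm
end

section
/- Every countable subgroup of ℤ^ω (the product of countably many copies of ℤ) is a free abelian group. -/
open Submodule

abbrev M : Type := ℕ → ℤ

/-- The cast map `(ℕ → ℤ) → (ℕ → ℚ)` as a `ℤ`-linear map. -/
noncomputable def castQ : (ℕ → ℤ) →ₗ[ℤ] (ℕ → ℚ) where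
  toFun x := fun i => (x i : ℚ)
  map_add' x y := by funext i; simp
  map_smul' c x := by funext i; simp

lemma castQ_inj : Function.Injective castQ := by
  intro x y h
  funext i
  have := congrFun h i
  simpa [castQ] using this

/-- the submodule of `ℕ → ℚ` of functions vanishing on coordinates `< m` -/
def Kq (m : ℕ) : Submodule ℚ (ℕ → ℚ) where
  carrier := {x | ∀ i < m, x i = 0}
  zero_mem' := by intro i _; rfl
  add_mem' := by intro x y hx hy i hi; simp [hx i hi, hy i hi]
  smul_mem' := by intro c x hx i hi; simp [hx i hi]

lemma Kq_anti {m m' : ℕ} (h : m ≤ m') : Kq m' ≤ Kq m := by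
  intro x hx i hi; exact hx i (lt_of_lt_of_le hi h)

/-- Lemma A: a finitely generated submodule of `ℤ^ω` is detected by finitely many
coordinates. -/
lemma lemmaA (S : Set M) (hS : S.Finite) :
    ∃ m : ℕ, ∀ x ∈ span ℤ S, (∀ i < m, x i = 0) → x = 0 := by
  set V : Submodule ℚ (ℕ → ℚ) := span ℚ (castQ '' S) with hV
  haveI : FiniteDimensional ℚ V := FiniteDimensional.span_of_finite ℚ (hS.image _)
  set D : ℕ → Submodule ℚ (ℕ → ℚ) := fun m => V ⊓ Kq m with hD
  have hDle : ∀ m, D m ≤ V := fun m => inf_le_left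
  haveI : ∀ m, FiniteDimensional ℚ (D m) := fun m =>
    Submodule.finiteDimensional_of_le (hDle m)
  set d : ℕ → ℕ := fun m => Module.finrank ℚ (D m) with hd
  -- find the minimum of d
  obtain ⟨m₀, hm₀⟩ : ∃ m₀, ∀ m, d m₀ ≤ d m := by
    obtain ⟨m₀, hm₀⟩ : sInf (Set.range d) ∈ Set.range d := Nat.sInf_mem ⟨d 0, 0, rfl⟩
    exact ⟨m₀, fun m => hm₀ ▸ Nat.sInf_le ⟨m, rfl⟩⟩
  have hstab : ∀ m, m₀ ≤ m → D m = D m₀ := by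
    intro m hm
    have hle : D m ≤ D m₀ := le_inf inf_le_left (le_trans inf_le_right (Kq_anti hm))
    exact le_antisymm hle (by
      have := Submodule.eq_of_le_of_finrank_le hle (hm₀ m)
      exact this.symm.le)
  have hbot : D m₀ = ⊥ := by
    rw [eq_bot_iff]
    intro x hx
    simp only [Submodule.mem_bot]
    funext i
    have hx' : x ∈ D (max m₀ (i + 1)) := (hstab _ (le_max_left _ _)).symm ▸ hx
    exact hx'.2 i (lt_of_lt_of_le (Nat.lt_succ_self i) (le_max_right _ _))
  refine ⟨m₀, fun x hx hcoord => ?_⟩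
  have hxV : castQ x ∈ V := by
    have : span ℤ S ≤ (V.restrictScalars ℤ).comap castQ := by
      rw [span_le]
      intro s hs
      exact subset_span ⟨s, hs, rfl⟩
    exact this hx
  have : castQ x ∈ D m₀ := ⟨hxV, fun i hi => by simp [castQ, hcoord i hi]⟩
  rw [hbot] at this
  exact castQ_inj (by simpa using this)




/-- The pure closure of `W` inside `G`. -/
def pureClosure (G W : Submodule ℤ M) : Submodule ℤ M where
  carrier := {x | x ∈ G ∧ ∃ c : ℤ, c ≠ 0 ∧ c • x ∈ W}
  zero_mem' := ⟨G.zero_mem, 1, one_ne_zero, by simp⟩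
  add_mem' := by
    rintro x y ⟨hxG, c, hc, hcx⟩ ⟨hyG, d, hd, hdy⟩
    refine ⟨G.add_mem hxG hyG, c * d, mul_ne_zero hc hd, ?_⟩
    have : (c * d) • (x + y) = d • (c • x) + c • (d • y) := by
      rw [smul_add, ← mul_smul, ← mul_smul, mul_comm d c]
    rw [this]
    exact W.add_mem (W.smul_mem _ hcx) (W.smul_mem _ hdy)
  smul_mem' := by
    rintro a x ⟨hxG, c, hc, hcx⟩
    refine ⟨G.smul_mem a hxG, c, hc, ?_⟩
    rw [smul_comm]
    exact W.smul_mem a hcx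

lemma pureClosure_le (G W : Submodule ℤ M) : pureClosure G W ≤ G := fun _ h => h.1

lemma pureClosure_mono (G : Submodule ℤ M) {W W' : Submodule ℤ M} (h : W ≤ W') :
    pureClosure G W ≤ pureClosure G W' := by
  rintro x ⟨hxG, c, hc, hcx⟩
  exact ⟨hxG, c, hc, h hcx⟩

lemma pureClosure_pure (G W : Submodule ℤ M) {c : ℤ} (hc : c ≠ 0) {x : M}
    (hxG : x ∈ G) (hcx : c • x ∈ pureClosure G W) : x ∈ pureClosure G W := by
  obtain ⟨-, d, hd, hdcx⟩ := hcx
  exact ⟨hxG, d * c, mul_ne_zero hd hc, by rwa [mul_smul]⟩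

lemma mem_pureClosure_self {G W : Submodule ℤ M} {x : M} (hxG : x ∈ G) (hxW : x ∈ W) :
    x ∈ pureClosure G W := ⟨hxG, 1, one_ne_zero, by simpa using hxW⟩


/-- A pure closure of a finitely generated submodule is a finite module. -/
lemma pureClosure_finite (G : Submodule ℤ M) (S : Set M) (hS : S.Finite) :
    Module.Finite ℤ (pureClosure G (span ℤ S)) := by
  obtain ⟨m, hm⟩ := lemmaA S hS
  set P := pureClosure G (span ℤ S) with hP
  -- the truncation map
  set φ : M →ₗ[ℤ] (Fin m → ℤ) :=
    { toFun := fun x => fun i => x i.1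
      map_add' := fun x y => rfl
      map_smul' := fun c x => rfl } with hφ
  set ψ : P →ₗ[ℤ] (Fin m → ℤ) := φ.comp P.subtype with hψ
  have hinj : Function.Injective ψ := by
    rw [← LinearMap.ker_eq_bot, eq_bot_iff]
    rintro ⟨x, hxG, c, hc, hcx⟩ hx
    have hx0 : ∀ i < m, x i = 0 := by
      intro i hi
      exact congrFun (hx : _) ⟨i, hi⟩
    have : c • x = 0 := by
      apply hm _ hcx
      intro i hi
      simp [hx0 i hi]
    have hx' : x = 0 := by
      rcases smul_eq_zero.mp this with h | h
      · exact absurd h hc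
      · exact h
    exact Subtype.ext hx'
  have e := LinearEquiv.ofInjective ψ hinj
  haveI : IsNoetherian ℤ (Fin m → ℤ) := inferInstance
  haveI : Module.Finite ℤ (LinearMap.range ψ) := by
    rw [Module.Finite.iff_fg]
    exact IsNoetherian.noetherian _
  exact Module.Finite.equiv e.symm

/-- `ℕ → ℤ` has no torsion. -/
lemma noZeroSMul_M : ∀ (c : ℤ) (x : M), c • x = 0 → c = 0 ∨ x = 0 := by
  intro c x h
  by_cases hc : c = 0
  · exact Or.inl hc
  · refine Or.inr (funext fun i => ?_)
    have := congrFun h i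
    simp only [Pi.smul_apply, smul_eq_mul, Pi.zero_apply] at this
    rcases mul_eq_zero.mp this with h' | h'
    · exact absurd h' hc
    · exact h'




/-- Extension lemma: if `A ≤ B`, `s` is an independent set spanning `A`, and the
quotient `B / A` is free, then `s` extends to an independent set spanning `B`. -/
lemma extend_basis_set {A B : Submodule ℤ M} (hAB : A ≤ B)
    (s : Set M) (hs : LinearIndependent (ι := s) ℤ Subtype.val) (hspan : span ℤ s = A)
    (hQ : Module.Free ℤ (B ⧸ (A.comap B.subtype))) :
    ∃ t : Set M, s ⊆ t ∧ LinearIndependent (ι := t) ℤ Subtype.val ∧ span ℤ t = B := by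
  set p : Submodule ℤ B := A.comap B.subtype with hp
  set Q := B ⧸ p with hQdef
  set b := hQ.chooseBasis with hb
  set ι := Module.Free.ChooseBasisIndex ℤ Q with hι
  -- lift the basis of the quotient
  have hsurj : Function.Surjective p.mkQ := Submodule.mkQ_surjective p
  choose f hf using fun i => hsurj (b i)
  set f' : ι → M := fun i => (f i : M) with hf'
  refine ⟨s ∪ Set.range f', Set.subset_union_left, ?_, ?_⟩
  · -- linear independence
    have hsA : s ⊆ A := hspan ▸ subset_span
    have hfA : LinearIndependent ℤ (fun x : s => (⟨x.1, hsA x.2⟩ : A)) := by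
      apply LinearIndependent.of_comp A.subtype
      convert hs
      rfl
    have hg : LinearIndependent ℤ (Submodule.Quotient.mk (p := A) ∘ f') := by
      -- map the independent family `b` through the injective map `B ⧸ p →ₗ M ⧸ A`
      have hle : p ≤ A.comap B.subtype := le_rfl
      set φ : Q →ₗ[ℤ] (M ⧸ A) := Submodule.mapQ p A B.subtype hle with hφ
      have hker : LinearMap.ker φ = ⊥ := by
        rw [hφ, Submodule.mapQ, Submodule.ker_liftQ_eq_bot]
        rw [LinearMap.ker_comp, Submodule.ker_mkQ]
      have : (Submodule.Quotient.mk (p := A) ∘ f') = φ ∘ b := by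
        funext i
        simp only [Function.comp_apply, hφ, hf']
        rw [← hf i]
        rfl
      rw [this]
      exact (b.linearIndependent).map' φ hker
    have := LinearIndependent.sumElim_of_quotient hfA f' hg
    refine this.linearIndepOn_id.mono (Eq.subset (Eq.symm ?_))
    rw [Set.Sum.elim_range, Subtype.range_val]
  · -- span
    have h1 : span ℤ (Set.range f') ⊔ A = B := by
      have h2 : p ⊔ span ℤ (Set.range f) = (⊤ : Submodule ℤ B) := by
        rw [← Submodule.map_mkQ_eq_top, Submodule.map_span, ← Set.range_comp]
        have : (p.mkQ ∘ f) = b := funext hf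
        rw [this, b.span_eq]
      have := congrArg (Submodule.map B.subtype) h2
      rw [Submodule.map_sup, Submodule.map_span, Submodule.map_top,
        Submodule.range_subtype, Submodule.map_comap_subtype,
        inf_eq_right.mpr hAB, ← Set.range_comp, sup_comm] at this
      convert this using 3
      rfl
    rw [span_union, hspan, sup_comm]
    exact h1


/-- Every countable subgroup of `ℤ^ω` (the product of countably many copies of `ℤ`)
is a free abelian group. -/
theorem stmt19 (G : AddSubgroup (ℕ → ℤ)) [Countable ↥G] :
    Module.Free ℤ ↥G := by
  classical
  set G' : Submodule ℤ M := AddSubgroup.toIntSubmodule G with hG'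
  haveI : Nonempty ↥G := ⟨⟨0, G.zero_mem⟩⟩
  obtain ⟨e, he⟩ := exists_surjective_nat ↥G
  set w : ℕ → M := fun k => ((e k : ↥G) : M) with hw
  set W : ℕ → Submodule ℤ M := fun n => span ℤ (w '' Set.Iio n) with hW
  have hWfin : ∀ n, (w '' Set.Iio n).Finite := fun n => (Set.finite_Iio n).image w
  set P : ℕ → Submodule ℤ M := fun n => pureClosure G' (W n) with hP
  have hPle : ∀ n, P n ≤ G' := fun n => pureClosure_le _ _
  have hPmono : ∀ n, P n ≤ P (n + 1) := fun n =>
    pureClosure_mono _ (span_mono (Set.image_mono fun i (hi : i < n) => hi.trans (Nat.lt_succ_self n)))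
  have hP0 : P 0 = ⊥ := by
    rw [eq_bot_iff]
    rintro x ⟨hxG, c, hc, hcx⟩
    have : W 0 = ⊥ := by
      have h0 : Set.Iio (0:ℕ) = ∅ := by ext i; simp
      rw [hW]
      simp [h0]
    rw [this, Submodule.mem_bot] at hcx
    rcases noZeroSMul_M c x hcx with h | h
    · exact absurd h hc
    · simp [h]
  haveI hPfin : ∀ n, Module.Finite ℤ (P n) := fun n => pureClosure_finite G' _ (hWfin n)
  -- the key extension step
  have key : ∀ n (s : Set M), LinearIndependent (ι := s) ℤ Subtype.val → span ℤ s = P n →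
      ∃ t : Set M, s ⊆ t ∧ LinearIndependent (ι := t) ℤ Subtype.val ∧ span ℤ t = P (n + 1) := by
    intro n s hs hspan
    haveI : Module.Finite ℤ ((P (n+1)) ⧸ ((P n).comap (P (n+1)).subtype)) :=
      Module.Finite.quotient ℤ _
    haveI : NoZeroSMulDivisors ℤ ((P (n+1)) ⧸ ((P n).comap (P (n+1)).subtype)) := by
      refine ⟨fun {c x} h => ?_⟩
      by_cases hc : c = 0
      · exact Or.inl hc
      · refine Or.inr ?_
        obtain ⟨x', rfl⟩ := Submodule.mkQ_surjective _ x
        rw [← map_smul, Submodule.mkQ_apply, Submodule.Quotient.mk_eq_zero] at h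
        rw [Submodule.mkQ_apply, Submodule.Quotient.mk_eq_zero]
        have hcx : (c • x' : M) ∈ P n := h
        have hx'G : (x' : M) ∈ G' := hPle (n+1) x'.2
        exact Submodule.mem_comap.mpr (pureClosure_pure G' (W n) hc hx'G hcx)
    haveI : Module.Free ℤ ((P (n+1)) ⧸ ((P n).comap (P (n+1)).subtype)) :=
      Module.free_of_finite_type_torsion_free'
    exact extend_basis_set (hPmono n) s hs hspan inferInstance
  -- construct the chain of independent spanning sets
  let S : ∀ n : ℕ, {s : Set M // LinearIndependent (ι := s) ℤ Subtype.val ∧ span ℤ s = P n} :=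
    fun n => Nat.rec
      ⟨∅, linearIndependent_empty ℤ M, by rw [span_empty, hP0]⟩
      (fun n ih => ⟨(key n ih.1 ih.2.1 ih.2.2).choose,
        (key n ih.1 ih.2.1 ih.2.2).choose_spec.2.1,
        (key n ih.1 ih.2.1 ih.2.2).choose_spec.2.2⟩) n
  have hSmono : ∀ n, (S n).1 ⊆ (S (n+1)).1 := fun n =>
    (key n (S n).1 (S n).2.1 (S n).2.2).choose_spec.1
  set T : Set M := ⋃ n, (S n).1 with hT
  have hTmono : Monotone fun n => (S n).1 := monotone_nat_of_le_succ hSmono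
  have hTindep : LinearIndependent (ι := T) ℤ Subtype.val :=
    linearIndepOn_iUnion_of_directed (v := id) (hTmono.directed_le) (fun n => (S n).2.1)
  have hTspan : span ℤ T = G' := by
    rw [hT, span_iUnion]
    apply le_antisymm
    · exact iSup_le fun n => by rw [(S n).2.2]; exact hPle n
    · intro x hx
      obtain ⟨k, hk⟩ := he ⟨x, hx⟩
      have hxP : x ∈ P (k + 1) := by
        apply mem_pureClosure_self hx
        apply subset_span
        exact ⟨k, Nat.lt_succ_self k, by rw [hw]; simp [hk]⟩
      have : x ∈ span ℤ (S (k+1)).1 := by rw [(S (k+1)).2.2]; exact hxP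
      exact le_iSup (fun n => span ℤ (S n).1) (k+1) this
  -- conclude: `G'` has a basis
  have hrange : Set.range (Subtype.val : T → M) = T := Subtype.range_val
  have hspan2 : span ℤ (Set.range (Subtype.val : T → M)) = G' := by rw [hrange, hTspan]
  let bT : Module.Basis T ℤ (span ℤ (Set.range (Subtype.val : T → M))) := Module.Basis.span hTindep
  let eq1 : (span ℤ (Set.range (Subtype.val : T → M))) ≃ₗ[ℤ] G' :=
    LinearEquiv.ofEq _ _ hspan2
  haveI : Module.Free ℤ G' := Module.Free.of_basis (bT.map eq1)
  let eGG' : G' ≃ₗ[ℤ] ↥G :=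
    { toFun := fun x => ⟨x.1, x.2⟩
      invFun := fun x => ⟨x.1, x.2⟩
      map_add' := fun x y => rfl
      map_smul' := fun c x => rfl
      left_inv := fun x => rfl
      right_inv := fun x => rfl }
  exact Module.Free.of_equiv eGG'
end
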